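/- arXiv:2408.11644 — 3 statements merged into one kernel-verified Lean document; each statement's English description precedes it below -/
import Mathlib

section
/- For every non-edge uv of G = H(n; p_1, ..., p_t), the graph G + uv contains a subgraph isomorphic to K_{p_1} ∪ K_{p_2} ∪ ... ∪ K_{p_t}. -/
open SimpleGraph Finset

/-- `H` is a subgraph of `G` (up to isomorphism): an injective homomorphism exists. -/
def IsSubgraphOf {α β : Type*} (H : SimpleGraph α) (G : SimpleGraph β) : Prop :=
  ∃ f : α → β, Function.Injective f ∧ ∀ a b, H.Adj a b → G.Adj (f a) (f b)

/-- `G` is `H`-saturated. -/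
def IsSat {α β : Type*} (G : SimpleGraph α) (H : SimpleGraph β) : Prop :=
  ¬ IsSubgraphOf H G ∧
    ∀ u v : α, u ≠ v → ¬ G.Adj u v →
      IsSubgraphOf H (G ⊔ SimpleGraph.fromEdgeSet {s(u, v)})

/-- First position of block `i` (for `2 ≤ i`) in `H(n; p₁, …, p_t)`. -/
def blockStart (p : ℕ → ℕ) (i : ℕ) : ℕ :=
  (p 1 - 2) + ∑ j ∈ Finset.Ico 2 i, (p j + 1)

def inBlock (p : ℕ → ℕ) (i : ℕ) (a : ℕ) : Prop :=
  blockStart p i ≤ a ∧ a < blockStart p i + (p i + 1)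

/-- `H(n; p₁, …, p_t) = K_{p₁-2} ∨ (K_{p₂+1} ∪ ⋯ ∪ K_{p_t+1} ∪ I_m)`. -/
def Hgraph (n t : ℕ) (p : ℕ → ℕ) : SimpleGraph (Fin n) :=
  SimpleGraph.fromRel (fun u v =>
    (u : ℕ) < p 1 - 2 ∨ ∃ i, 2 ≤ i ∧ i ≤ t ∧ inBlock p i (u : ℕ) ∧ inBlock p i (v : ℕ))

/-- The disjoint union `K_{p₁} ∪ K_{p₂} ∪ ⋯ ∪ K_{p_t}`. -/
def cliqueUnion (t : ℕ) (p : ℕ → ℕ) :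
    SimpleGraph (Σ i : Fin t, Fin (p ((i : ℕ) + 1))) where
  Adj a b := a ≠ b ∧ a.1 = b.1
  symm := ⟨fun a b h => ⟨h.1.symm, h.2.symm⟩⟩
  loopless := ⟨fun a h => h.1 rfl⟩

/-- The disjoint union `K_{p₂} ∪ ⋯ ∪ K_{p_t}`. -/
def cliqueUnionTail (t : ℕ) (p : ℕ → ℕ) :
    SimpleGraph (Σ i : Fin (t - 1), Fin (p ((i : ℕ) + 2))) where
  Adj a b := a ≠ b ∧ a.1 = b.1
  symm := ⟨fun a b h => ⟨h.1.symm, h.2.symm⟩⟩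
  loopless := ⟨fun a h => h.1 rfl⟩

lemma blockStart_succ (p : ℕ → ℕ) {i : ℕ} (hi : 2 ≤ i) :
    blockStart p (i + 1) = blockStart p i + (p i + 1) := by
  unfold blockStart
  rw [Finset.sum_Ico_succ_top hi, Nat.add_assoc]

lemma blockStart_mono (p : ℕ → ℕ) {i k : ℕ} (h : i ≤ k) :
    blockStart p i ≤ blockStart p k :=
  Nat.add_le_add_left (Finset.sum_le_sum_of_subset (Finset.Ico_subset_Ico_right h)) _

lemma blockStart_two (p : ℕ → ℕ) : blockStart p 2 = p 1 - 2 := by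
  simp [blockStart]

lemma inBlock_unique (p : ℕ → ℕ) {i k a : ℕ} (hi : 2 ≤ i) (hk : 2 ≤ k)
    (h1 : inBlock p i a) (h2 : inBlock p k a) : i = k := by
  unfold inBlock at h1 h2
  rcases lt_trichotomy i k with h | h | h
  · have := blockStart_mono p (Nat.succ_le_of_lt h)
    rw [blockStart_succ p hi] at this
    omega
  · exact h
  · have := blockStart_mono p (Nat.succ_le_of_lt h)
    rw [blockStart_succ p hk] at this
    omega

/-- Adding any non-edge to `H(n; p₁, …, p_t)` creates a copy of `K_{p₁} ∪ ⋯ ∪ K_{p_t}`. -/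
theorem Hgraph_add_edge_contains (n t : ℕ) (p : ℕ → ℕ) (ht : 2 ≤ t) (hp1 : 2 ≤ p 1)
    (hmono : ∀ i j, 1 ≤ i → i ≤ j → j ≤ t → p i ≤ p j)
    (hfit : blockStart p (t + 1) + 1 ≤ n) :
    ∀ u v : Fin n, u ≠ v → ¬ (Hgraph n t p).Adj u v →
      IsSubgraphOf (cliqueUnion t p)
        (Hgraph n t p ⊔ SimpleGraph.fromEdgeSet {s(u, v)}) := by
  intro u v huv hadj
  classical
  set c := p 1 - 2 with hcdef
  -- extract non-adjacency facts
  rw [Hgraph, SimpleGraph.fromRel_adj, not_and] at hadj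
  have hrel := hadj huv
  rw [not_or, not_or, not_or] at hrel
  obtain ⟨⟨hu, hub⟩, hv, hvb⟩ := hrel
  push_neg at hu hv
  have hblk : ∀ i, 2 ≤ i → i ≤ t → ¬ (inBlock p i (u : ℕ) ∧ inBlock p i (v : ℕ)) := by
    intro i h2i hit hcon
    exact hub ⟨i, h2i, hit, hcon.1, hcon.2⟩
  have hne : (u : ℕ) ≠ (v : ℕ) := fun h => huv (Fin.ext h)
  have hcle : ∀ k, 2 ≤ k → c ≤ blockStart p k := by
    intro k hk
    calc c = blockStart p 2 := by rw [hcdef, blockStart_two]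
    _ ≤ blockStart p k := blockStart_mono p hk
  have hcfit : c ≤ blockStart p (t + 1) := hcle (t + 1) (by omega)
  -- the "bad" offset in each block (position of u or v if present)
  set bad : ℕ → ℕ := fun k =>
    if inBlock p k (u : ℕ) then (u : ℕ) - blockStart p k
    else if inBlock p k (v : ℕ) then (v : ℕ) - blockStart p k
    else p k with hbadDef
  have hskip : ∀ k j, 2 ≤ k → k ≤ t → j < p k →
      inBlock p k (blockStart p k + (if j < bad k then j else j + 1)) ∧
      blockStart p k + (if j < bad k then j else j + 1) ≠ (u : ℕ) ∧
      blockStart p k + (if j < bad k then j else j + 1) ≠ (v : ℕ) := by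
    intro k j h2k hkt hj
    set s := if j < bad k then j else j + 1 with hs
    have hsle : s ≤ p k := by rw [hs]; split <;> omega
    have hsne : s ≠ bad k := by rw [hs]; split <;> omega
    have hib : inBlock p k (blockStart p k + s) := ⟨Nat.le_add_right _ _, by omega⟩
    refine ⟨hib, ?_, ?_⟩
    · by_cases hu' : inBlock p k (u : ℕ)
      · have hbd : bad k = (u : ℕ) - blockStart p k := by rw [hbadDef]; simp [hu']
        have hle : blockStart p k ≤ (u : ℕ) := hu'.1
        intro heq
        exact hsne (by omega)
      · intro heq
        exact hu' (heq ▸ hib)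
    · by_cases hu' : inBlock p k (u : ℕ)
      · have hv' : ¬ inBlock p k (v : ℕ) := fun h => hblk k h2k hkt ⟨hu', h⟩
        intro heq
        exact hv' (heq ▸ hib)
      · by_cases hv' : inBlock p k (v : ℕ)
        · have hbd : bad k = (v : ℕ) - blockStart p k := by rw [hbadDef]; simp [hu', hv']
          have hle : blockStart p k ≤ (v : ℕ) := hv'.1
          intro heq
          exact hsne (by omega)
        · intro heq
          exact hv' (heq ▸ hib)
  -- the embedding on values
  set f0 : (Σ i : Fin t, Fin (p ((i : ℕ) + 1))) → ℕ := fun a =>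
    if (a.1 : ℕ) = 0 then
      (if (a.2 : ℕ) < c then (a.2 : ℕ) else if (a.2 : ℕ) = c then (u : ℕ) else (v : ℕ))
    else blockStart p ((a.1 : ℕ) + 1) +
      (if (a.2 : ℕ) < bad ((a.1 : ℕ) + 1) then (a.2 : ℕ) else (a.2 : ℕ) + 1) with hf0Def
  have hA : ∀ (i : Fin t) (j : Fin (p ((i : ℕ) + 1))), (i : ℕ) = 0 →
      ((j : ℕ) < c ∧ f0 ⟨i, j⟩ = (j : ℕ)) ∨ ((j : ℕ) = c ∧ f0 ⟨i, j⟩ = (u : ℕ)) ∨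
      ((j : ℕ) = c + 1 ∧ f0 ⟨i, j⟩ = (v : ℕ)) := by
    intro i j h
    have hp : p ((i : ℕ) + 1) = p 1 := by rw [h]
    have hj : (j : ℕ) < p 1 := by have := j.isLt; omega
    by_cases h1 : (j : ℕ) < c
    · exact Or.inl ⟨h1, by simp [hf0Def, h, h1]⟩
    · by_cases h2 : (j : ℕ) = c
      · exact Or.inr (Or.inl ⟨h2, by simp [hf0Def, h, h1, h2]⟩)
      · refine Or.inr (Or.inr ⟨by omega, by simp [hf0Def, h, h1, h2]⟩)
  have hB : ∀ (i : Fin t) (j : Fin (p ((i : ℕ) + 1))), (i : ℕ) ≠ 0 →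
      inBlock p ((i : ℕ) + 1) (f0 ⟨i, j⟩) ∧ f0 ⟨i, j⟩ ≠ (u : ℕ) ∧ f0 ⟨i, j⟩ ≠ (v : ℕ) := by
    intro i j h
    have h2k : 2 ≤ (i : ℕ) + 1 := by omega
    have hkt : (i : ℕ) + 1 ≤ t := i.isLt
    have hj : (j : ℕ) < p ((i : ℕ) + 1) := j.isLt
    have := hskip ((i : ℕ) + 1) (j : ℕ) h2k hkt hj
    simpa [hf0Def, h] using this
  have hbound : ∀ a, f0 a < n := by
    rintro ⟨i, j⟩
    by_cases h : (i : ℕ) = 0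
    · rcases hA i j h with ⟨h1, he⟩ | ⟨h1, he⟩ | ⟨h1, he⟩ <;> rw [he]
      · omega
      · exact u.isLt
      · exact v.isLt
    · obtain ⟨⟨_, hlt⟩, _, _⟩ := hB i j h
      have hsucc := blockStart_succ p (show 2 ≤ (i : ℕ) + 1 by omega)
      have hle := blockStart_mono p (show (i : ℕ) + 1 + 1 ≤ t + 1 by
        have := i.isLt; omega)
      omega
  -- injectivity at the value level
  have hinj0 : ∀ a b, f0 a = f0 b → a = b := by
    rintro ⟨i, j⟩ ⟨i', j'⟩ hval
    by_cases hi : (i : ℕ) = 0 <;> by_cases hi' : (i' : ℕ) = 0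
    · have hii : i = i' := Fin.ext (by omega)
      subst hii
      have hjj : (j : ℕ) = (j' : ℕ) := by
        rcases hA i j hi with ⟨h1, e1⟩ | ⟨h1, e1⟩ | ⟨h1, e1⟩ <;>
          rcases hA i j' hi with ⟨h2, e2⟩ | ⟨h2, e2⟩ | ⟨h2, e2⟩ <;> omega
      rw [Fin.ext hjj]
    · exfalso
      obtain ⟨hib, hnu, hnv⟩ := hB i' j' hi'
      have hge : c ≤ f0 ⟨i', j'⟩ := le_trans (hcle _ (by omega)) hib.1
      rcases hA i j hi with ⟨h1, e1⟩ | ⟨h1, e1⟩ | ⟨h1, e1⟩ <;> omega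
    · exfalso
      obtain ⟨hib, hnu, hnv⟩ := hB i j hi
      have hge : c ≤ f0 ⟨i, j⟩ := le_trans (hcle _ (by omega)) hib.1
      rcases hA i' j' hi' with ⟨h1, e1⟩ | ⟨h1, e1⟩ | ⟨h1, e1⟩ <;> omega
    · obtain ⟨hib, _, _⟩ := hB i j hi
      obtain ⟨hib', _, _⟩ := hB i' j' hi'
      rw [hval] at hib
      have hii : (i : ℕ) + 1 = (i' : ℕ) + 1 :=
        inBlock_unique p (by omega) (by omega) hib hib'
      have hii' : i = i' := Fin.ext (by omega)
      subst hii'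
      have hval' := hval
      simp only [hf0Def, if_neg hi] at hval'
      have hjj : (j : ℕ) = (j' : ℕ) := by
        split_ifs at hval' <;> omega
      rw [Fin.ext hjj]
  -- adjacency helper
  have hedge : ∀ x y : Fin n, (x : ℕ) ≠ (y : ℕ) →
      ((x : ℕ) < c ∨ (y : ℕ) < c ∨
        (∃ k, 2 ≤ k ∧ k ≤ t ∧ inBlock p k (x : ℕ) ∧ inBlock p k (y : ℕ)) ∨
        ((x : ℕ) = (u : ℕ) ∧ (y : ℕ) = (v : ℕ)) ∨
        ((x : ℕ) = (v : ℕ) ∧ (y : ℕ) = (u : ℕ))) →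
      (Hgraph n t p ⊔ SimpleGraph.fromEdgeSet {s(u, v)}).Adj x y := by
    intro x y hxy h
    have hxyne : x ≠ y := fun h' => hxy (congrArg Fin.val h')
    rw [SimpleGraph.sup_adj, Hgraph, SimpleGraph.fromRel_adj]
    rcases h with h | h | ⟨k, h2, h3, h4, h5⟩ | ⟨h4, h5⟩ | ⟨h4, h5⟩
    · exact Or.inl ⟨hxyne, Or.inl (Or.inl h)⟩
    · exact Or.inl ⟨hxyne, Or.inr (Or.inl h)⟩
    · exact Or.inl ⟨hxyne, Or.inl (Or.inr ⟨k, h2, h3, h4, h5⟩)⟩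
    · have hx : x = u := Fin.ext h4
      have hy : y = v := Fin.ext h5
      subst hx; subst hy
      exact Or.inr (by simp [SimpleGraph.fromEdgeSet_adj, huv])
    · have hx : x = v := Fin.ext h4
      have hy : y = u := Fin.ext h5
      subst hx; subst hy
      refine Or.inr (by simp [SimpleGraph.fromEdgeSet_adj, huv, Sym2.eq_swap]; exact fun h => huv h.symm)
  -- adjacency condition at the value level
  have hcond : ∀ a b : (Σ i : Fin t, Fin (p ((i : ℕ) + 1))), a ≠ b → a.1 = b.1 →
      (f0 a < c ∨ f0 b < c ∨
        (∃ k, 2 ≤ k ∧ k ≤ t ∧ inBlock p k (f0 a) ∧ inBlock p k (f0 b)) ∨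
        (f0 a = (u : ℕ) ∧ f0 b = (v : ℕ)) ∨
        (f0 a = (v : ℕ) ∧ f0 b = (u : ℕ))) := by
    rintro ⟨i, j⟩ ⟨i', j'⟩ hab hfst
    have hii : i = i' := hfst
    subst hii
    have hjj : j ≠ j' := fun h => hab (by rw [h])
    have hjj' : (j : ℕ) ≠ (j' : ℕ) := fun h => hjj (Fin.ext h)
    by_cases hi : (i : ℕ) = 0
    · rcases hA i j hi with ⟨h1, e1⟩ | ⟨h1, e1⟩ | ⟨h1, e1⟩ <;>
        rcases hA i j' hi with ⟨h2, e2⟩ | ⟨h2, e2⟩ | ⟨h2, e2⟩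
      · exact Or.inl (by omega)
      · exact Or.inl (by omega)
      · exact Or.inl (by omega)
      · exact Or.inr (Or.inl (by omega))
      · exact absurd (by omega) hjj'
      · exact Or.inr (Or.inr (Or.inr (Or.inl ⟨e1, e2⟩)))
      · exact Or.inr (Or.inl (by omega))
      · exact Or.inr (Or.inr (Or.inr (Or.inr ⟨e1, e2⟩)))
      · exact absurd (by omega) hjj'
    · obtain ⟨hib, _, _⟩ := hB i j hi
      obtain ⟨hib', _, _⟩ := hB i j' hi
      exact Or.inr (Or.inr (Or.inl ⟨(i : ℕ) + 1, by omega, i.isLt, hib, hib'⟩))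
  refine ⟨fun a => ⟨f0 a, hbound a⟩, ?_, ?_⟩
  · intro a b hab
    exact hinj0 a b (congrArg Fin.val hab)
  · rintro a b ⟨hab, hfst⟩
    have hne' : f0 a ≠ f0 b := fun h => hab (hinj0 a b h)
    exact hedge _ _ hne' (hcond a b hab hfst)
end

section
/- Suppose t ≥ 2, n > 3(p_1 - 2) + Σ_{i=2}^t p_i(p_i+1), G is a (K_{p_1} ∪ ... ∪ K_{p_t})-saturated graph of order n with e(G) ≤ e(H(n; p_1, ..., p_t)), and v is a minimum-degree vertex of G. Then N_G(v) ⊆ N_G(w) for every vertex w outside N_G(v) ∪ {v}. -/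
open SimpleGraph Finset

section Aux

lemma sat_pair {n t : ℕ} {p : ℕ → ℕ}
    (hmono : ∀ i j, 1 ≤ i → i ≤ j → j ≤ t → p i ≤ p j)
    {G : SimpleGraph (Fin n)} (hsat : IsSat G (cliqueUnion t p))
    {x y : Fin n} (hne : x ≠ y) (hnadj : ¬ G.Adj x y) :
    ∃ S : Finset (Fin n), p 1 ≤ S.card + 2 ∧
      (∀ z ∈ S, G.Adj x z ∧ G.Adj y z) ∧
      (∀ z ∈ S, ∀ z' ∈ S, z ≠ z' → G.Adj z z') := by
  classical
  obtain ⟨f, finj, fhom⟩ := hsat.2 x y hne hnadj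
  have key : ∃ σ τ : (Σ i : Fin t, Fin (p ((i:ℕ)+1))),
      σ.1 = τ.1 ∧ σ ≠ τ ∧ f σ = x ∧ f τ = y := by
    by_contra hk
    push_neg at hk
    apply hsat.1
    refine ⟨f, finj, fun a b hab => ?_⟩
    have h := fhom a b hab
    rw [sup_adj, fromEdgeSet_adj] at h
    rcases h with h | ⟨hs, hne'⟩
    · exact h
    · rcases Sym2.eq_iff.mp hs with ⟨h1, h2⟩ | ⟨h1, h2⟩
      · exact absurd h2 (hk a b hab.2 hab.1 h1)
      · exact absurd h1 (hk b a hab.2.symm hab.1.symm h2)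
  obtain ⟨⟨i, z1⟩, ⟨i', z2⟩, hst1, hstne, hfx, hfy⟩ := key
  simp only at hst1
  subst hst1
  have hz12 : z1 ≠ z2 := by
    intro h; subst h; exact hstne rfl
  set g : Fin (p ((i:ℕ)+1)) → Fin n := fun z => f ⟨i, z⟩ with hg
  have ginj : Function.Injective g := by
    intro a b h
    have := finj h
    simpa using this
  have hpi : p 1 ≤ p ((i:ℕ)+1) := hmono 1 ((i:ℕ)+1) le_rfl (by omega)
    (by have := i.isLt; omega)
  set S : Finset (Fin n) := (((univ : Finset (Fin (p ((i:ℕ)+1)))).erase z1).erase z2).image g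
    with hS
  have hmk : ∀ (a b : Fin (p ((i:ℕ)+1))), a ≠ b →
      (cliqueUnion t p).Adj ⟨i, a⟩ ⟨i, b⟩ := by
    intro a b hab
    exact ⟨by simpa using hab, rfl⟩
  have hadj : ∀ (A B : Σ j : Fin t, Fin (p ((j:ℕ)+1))), (cliqueUnion t p).Adj A B →
      f A ≠ x → f A ≠ y → G.Adj (f A) (f B) := by
    intro A B hAB hAx hAy
    have h := fhom A B hAB
    rw [sup_adj, fromEdgeSet_adj] at h
    rcases h with h | ⟨hs, _⟩
    · exact h
    · rcases Sym2.eq_iff.mp hs with ⟨h1, _⟩ | ⟨h1, _⟩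
      · exact absurd h1 hAx
      · exact absurd h1 hAy
  have hmemS : ∀ z : Fin (p ((i:ℕ)+1)), z ≠ z1 → z ≠ z2 → g z ≠ x ∧ g z ≠ y := by
    intro z h1 h2
    constructor
    · intro h; rw [← hfx] at h; exact h1 (by simpa using finj h)
    · intro h; rw [← hfy] at h; exact h2 (by simpa using finj h)
  refine ⟨S, ?_, ?_, ?_⟩
  · have hc : S.card = p ((i:ℕ)+1) - 2 := by
      rw [hS, Finset.card_image_of_injective _ ginj, Finset.card_erase_of_mem,
        Finset.card_erase_of_mem (mem_univ z1), card_univ, Fintype.card_fin]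
      · omega
      · exact Finset.mem_erase.mpr ⟨hz12.symm, mem_univ z2⟩
    omega
  · intro w hw
    obtain ⟨z, hz, rfl⟩ := Finset.mem_image.mp hw
    rw [Finset.mem_erase, Finset.mem_erase] at hz
    obtain ⟨hz2, hz1, _⟩ := hz
    obtain ⟨hgx, hgy⟩ := hmemS z hz1 hz2
    constructor
    · have h := (hadj ⟨i, z⟩ ⟨i, z1⟩ (hmk z z1 hz1) hgx hgy).symm
      rwa [hfx] at h
    · have h := (hadj ⟨i, z⟩ ⟨i, z2⟩ (hmk z z2 hz2) hgx hgy).symm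
      rwa [hfy] at h
  · intro w hw w' hw' hww'
    obtain ⟨z, hz, rfl⟩ := Finset.mem_image.mp hw
    obtain ⟨z', hz', rfl⟩ := Finset.mem_image.mp hw'
    rw [Finset.mem_erase, Finset.mem_erase] at hz hz'
    have hzz' : z ≠ z' := fun h => hww' (by rw [h])
    obtain ⟨hgx, hgy⟩ := hmemS z hz.2.1 hz.1
    exact hadj ⟨i, z⟩ ⟨i, z'⟩ (hmk z z' hzz') hgx hgy

lemma blockStart_mono_s6 (p : ℕ → ℕ) {i j : ℕ} (h2 : 2 ≤ i) (hij : i < j) :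
    blockStart p i + (p i + 1) ≤ blockStart p j := by
  unfold blockStart
  have h1 : ∑ k ∈ Finset.Ico 2 (i+1), (p k + 1) = (∑ k ∈ Finset.Ico 2 i, (p k + 1)) + (p i + 1) :=
    Finset.sum_Ico_succ_top h2 _
  have h3 : ∑ k ∈ Finset.Ico 2 (i+1), (p k + 1) ≤ ∑ k ∈ Finset.Ico 2 j, (p k + 1) :=
    Finset.sum_le_sum_of_subset (Finset.Ico_subset_Ico le_rfl hij)
  omega

lemma block_disjoint (p : ℕ → ℕ) {i j a : ℕ} (hi : 2 ≤ i) (hj : 2 ≤ j)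
    (ha : inBlock p i a) (hb : inBlock p j a) : i = j := by
  by_contra hne
  rcases Nat.lt_or_ge i j with h | h
  · have := blockStart_mono_s6 p hi h
    obtain ⟨h1, h2⟩ := ha; obtain ⟨h3, h4⟩ := hb; omega
  · have hij : j < i := by omega
    have := blockStart_mono_s6 p hj hij
    obtain ⟨h1, h2⟩ := ha; obtain ⟨h3, h4⟩ := hb; omega

lemma H_edge_bound {n t : ℕ} (p : ℕ → ℕ) (hcn : p 1 - 2 ≤ n) :
    2 * (Hgraph n t p).edgeSet.ncard ≤
      (p 1 - 2) * (n - 1) + (p 1 - 2) * (n - (p 1 - 2)) +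
        ∑ i ∈ Finset.Icc 2 t, p i * (p i + 1) := by
  classical
  set c := p 1 - 2 with hc
  set H := Hgraph n t p with hH
  have hncard : H.edgeSet.ncard = H.edgeFinset.card := by
    rw [Set.ncard_eq_toFinset_card']
    congr 1
  rw [hncard, ← H.sum_degrees_eq_twice_card_edges]
  have hadj_char : ∀ x y : Fin n, H.Adj x y ↔ x ≠ y ∧
      (((x:ℕ) < c ∨ (y:ℕ) < c) ∨ ∃ i, 2 ≤ i ∧ i ≤ t ∧ inBlock p i (x:ℕ) ∧ inBlock p i (y:ℕ)) := by
    intro x y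
    rw [hH, Hgraph, SimpleGraph.fromRel_adj]
    constructor
    · rintro ⟨hne, (h | h) | (h | h)⟩
      · exact ⟨hne, Or.inl (Or.inl h)⟩
      · obtain ⟨i, h1, h2, h3, h4⟩ := h
        exact ⟨hne, Or.inr ⟨i, h1, h2, h3, h4⟩⟩
      · exact ⟨hne, Or.inl (Or.inr h)⟩
      · obtain ⟨i, h1, h2, h3, h4⟩ := h
        exact ⟨hne, Or.inr ⟨i, h1, h2, h4, h3⟩⟩
    · rintro ⟨hne, (h | h) | h⟩
      · exact ⟨hne, Or.inl (Or.inl h)⟩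
      · exact ⟨hne, Or.inr (Or.inl h)⟩
      · obtain ⟨i, h1, h2, h3, h4⟩ := h
        exact ⟨hne, Or.inl (Or.inr ⟨i, h1, h2, h3, h4⟩)⟩
  set core : Finset (Fin n) := univ.filter (fun y : Fin n => (y:ℕ) < c) with hcore
  have hcore_card : core.card = c := by
    have himg : core = (univ : Finset (Fin c)).image (Fin.castLE hcn) := by
      ext y
      simp only [hcore, Finset.mem_filter, Finset.mem_univ, true_and, Finset.mem_image]
      constructor
      · intro hy
        refine ⟨⟨(y:ℕ), hy⟩, ?_⟩
        ext
        simp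
      · rintro ⟨z, rfl⟩
        exact z.isLt
    rw [himg, Finset.card_image_of_injective _ (Fin.castLE_injective hcn), card_univ,
      Fintype.card_fin]
  set blockF : ℕ → Finset (Fin n) := fun i => univ.filter (fun y : Fin n => inBlock p i (y:ℕ))
    with hblockF
  have hblock_card : ∀ i, (blockF i).card ≤ p i + 1 := by
    intro i
    have : (blockF i).card ≤ (Finset.Ico (blockStart p i) (blockStart p i + (p i + 1))).card := by
      apply Finset.card_le_card_of_injOn (fun y : Fin n => (y:ℕ))
      · intro y hy
        have hy : y ∈ blockF i := hy
        rw [hblockF] at hy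
        simp only [Finset.mem_filter] at hy
        exact Finset.mem_Ico.mpr hy.2
      · exact Fin.val_injective.injOn
    simpa using this
  have hdeg2 : ∀ x : Fin n, c ≤ (x:ℕ) → ∀ i, 2 ≤ i → i ≤ t → inBlock p i (x:ℕ) →
      H.degree x ≤ c + p i := by
    intro x hx i hi2 hit hbx
    have hsub : H.neighborFinset x ⊆ core ∪ (blockF i).erase x := by
      intro y hy
      rw [SimpleGraph.mem_neighborFinset, hadj_char] at hy
      obtain ⟨hne, (h | h) | ⟨j, hj1, hj2, hj3, hj4⟩⟩ := hy
      · omega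
      · exact Finset.mem_union_left _ (by simp [hcore, h])
      · have : j = i := block_disjoint p hj1 hi2 hj3 hbx
        subst this
        refine Finset.mem_union_right _ (Finset.mem_erase.mpr ⟨hne.symm, ?_⟩)
        simp [hblockF, hj4]
    calc H.degree x ≤ (core ∪ (blockF i).erase x).card := Finset.card_le_card hsub
      _ ≤ core.card + ((blockF i).erase x).card := Finset.card_union_le _ _
      _ ≤ c + p i := by
          have h1 : x ∈ blockF i := by simp [hblockF, hbx]
          have h2 := Finset.card_erase_of_mem h1
          have h3 := hblock_card i
          have h4 : 1 ≤ (blockF i).card := Finset.card_pos.mpr ⟨x, h1⟩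
          omega
  have hdeg3 : ∀ x : Fin n, c ≤ (x:ℕ) → (∀ i, 2 ≤ i → i ≤ t → ¬ inBlock p i (x:ℕ)) →
      H.degree x ≤ c := by
    intro x hx hnob
    have hsub : H.neighborFinset x ⊆ core := by
      intro y hy
      rw [SimpleGraph.mem_neighborFinset, hadj_char] at hy
      obtain ⟨hne, (h | h) | ⟨j, hj1, hj2, hj3, hj4⟩⟩ := hy
      · omega
      · simp [hcore, h]
      · exact absurd hj3 (hnob j hj1 hj2)
    calc H.degree x ≤ core.card := Finset.card_le_card hsub
      _ = c := hcore_card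
  set T : Fin n → ℕ := fun x => ∑ i ∈ Finset.Icc 2 t, if inBlock p i (x:ℕ) then p i else 0
    with hT
  have hdegT : ∀ x : Fin n, ¬ ((x:ℕ) < c) → H.degree x ≤ c + T x := by
    intro x hx
    by_cases hex : ∃ i, 2 ≤ i ∧ i ≤ t ∧ inBlock p i (x:ℕ)
    · obtain ⟨i, hi1, hi2, hi3⟩ := hex
      have h1 : H.degree x ≤ c + p i := hdeg2 x (by omega) i hi1 hi2 hi3
      have h2 : p i ≤ T x := by
        rw [hT]
        have : (if inBlock p i (x:ℕ) then p i else 0) = p i := if_pos hi3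
        calc p i = if inBlock p i (x:ℕ) then p i else 0 := this.symm
          _ ≤ _ := Finset.single_le_sum (f := fun j => if inBlock p j (x:ℕ) then p j else 0)
              (fun j _ => by positivity) (Finset.mem_Icc.mpr ⟨hi1, hi2⟩)
      omega
    · push_neg at hex
      have := hdeg3 x (by omega) (fun i h1 h2 h3 => hex i h1 h2 h3)
      omega
  -- split the sum
  have hsplit := Finset.sum_filter_add_sum_filter_not (univ : Finset (Fin n))
    (fun y : Fin n => (y:ℕ) < c) (fun x => H.degree x)
  have hcore_sum : ∑ x ∈ core, H.degree x ≤ c * (n - 1) := by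
    calc ∑ x ∈ core, H.degree x ≤ ∑ _x ∈ core, (n-1) := by
          apply Finset.sum_le_sum
          intro x _
          have := H.degree_lt_card_verts x
          rw [Fintype.card_fin] at this
          omega
      _ = c * (n-1) := by rw [Finset.sum_const, hcore_card, smul_eq_mul]
  have hnotcore_card : (univ.filter (fun y : Fin n => ¬ (y:ℕ) < c)).card = n - c := by
    have := Finset.card_filter_add_card_filter_not (s := (univ : Finset (Fin n)))
      (p := fun y : Fin n => (y:ℕ) < c)
    rw [Finset.card_univ, Fintype.card_fin] at this
    have h2 : (Finset.filter (fun y : Fin n => (y:ℕ) < c) univ).card = c := hcore_card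
    omega
  have hT_total : ∑ x : Fin n, T x ≤ ∑ i ∈ Finset.Icc 2 t, p i * (p i + 1) := by
    rw [hT, Finset.sum_comm]
    apply Finset.sum_le_sum
    intro i _
    have : ∑ x : Fin n, (if inBlock p i (x:ℕ) then p i else 0) = (blockF i).card * p i := by
      rw [← Finset.sum_filter, Finset.sum_const, smul_eq_mul]
    rw [this]
    calc (blockF i).card * p i ≤ (p i + 1) * p i :=
          Nat.mul_le_mul_right _ (hblock_card i)
      _ = p i * (p i + 1) := Nat.mul_comm _ _
  have hnotcore_sum : ∑ x ∈ univ.filter (fun y : Fin n => ¬ (y:ℕ) < c), H.degree x ≤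
      c * (n - c) + ∑ i ∈ Finset.Icc 2 t, p i * (p i + 1) := by
    calc ∑ x ∈ univ.filter (fun y : Fin n => ¬ (y:ℕ) < c), H.degree x
        ≤ ∑ x ∈ univ.filter (fun y : Fin n => ¬ (y:ℕ) < c), (c + T x) := by
          apply Finset.sum_le_sum
          intro x hx
          exact hdegT x (by simpa using (Finset.mem_filter.mp hx).2)
      _ = c * (n - c) + ∑ x ∈ univ.filter (fun y : Fin n => ¬ (y:ℕ) < c), T x := by
          rw [Finset.sum_add_distrib, Finset.sum_const, hnotcore_card, smul_eq_mul,
            Nat.mul_comm]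
      _ ≤ c * (n - c) + ∑ x : Fin n, T x := by
          refine Nat.add_le_add_left ?_ _
          exact Finset.sum_le_sum_of_subset_of_nonneg (Finset.filter_subset _ _)
            (fun x _ _ => Nat.zero_le _)
      _ ≤ c * (n - c) + ∑ i ∈ Finset.Icc 2 t, p i * (p i + 1) :=
          Nat.add_le_add_left hT_total _
  calc ∑ x : Fin n, H.degree x
      = ∑ x ∈ core, H.degree x + ∑ x ∈ univ.filter (fun y : Fin n => ¬ (y:ℕ) < c), H.degree x :=
        hsplit.symm
    _ ≤ c * (n - 1) + (c * (n - c) + ∑ i ∈ Finset.Icc 2 t, p i * (p i + 1)) := by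
        exact Nat.add_le_add hcore_sum hnotcore_sum
    _ = c * (n - 1) + c * (n - c) + ∑ i ∈ Finset.Icc 2 t, p i * (p i + 1) := by ring

lemma final_numeric (cz dz az bz qz wz nz pz bigB bigM ez : ℤ)
    (h1 : 2*ez = 2*dz + bigB + bigM)
    (h2 : 2*ez ≤ cz*(nz-1) + cz*(nz-cz) + pz)
    (h3 : az + qz*(qz-1) ≤ bigB)
    (h4 : (wz-bz)*(cz+dz) + bz*(2*cz+bz-1) ≤ bigM)
    (h5 : wz + dz + 1 = nz)
    (h6 : cz+1 ≤ dz) (h7 : dz ≤ 2*cz) (h8 : cz ≤ qz)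
    (h9 : cz+1 ≤ az+bz) (h10 : 1 ≤ bz) (h11 : bz ≤ wz)
    (h12 : 3*cz + pz < nz) (h13 : (cz+2)*(cz+3) ≤ pz) (h14 : 0 ≤ az) : False := by
  obtain ⟨s, rfl⟩ : ∃ s, dz = cz + s := ⟨dz - cz, by ring⟩
  obtain ⟨W, rfl⟩ : ∃ W, wz = (2*cz + pz - s) + W := ⟨wz - (2*cz + pz - s), by ring⟩
  have hs1 : 1 ≤ s := by omega
  have hs2 : s ≤ cz := by omega
  have hc1 : 1 ≤ cz := by omega
  have hW0 : 0 ≤ W := by omega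
  have hQ : cz*(cz-1) ≤ qz*(qz-1) := by
    nlinarith [mul_nonneg (sub_nonneg.mpr h8) (by omega : (0:ℤ) ≤ qz + cz - 1)]
  -- key reduced inequality
  have key : az + (s-1)*pz + s*(2-s) + bz*(bz-1-s) + (s-1)*W ≤ 0 := by nlinarith []
  have hP0 : 0 < pz := by nlinarith
  rcases eq_or_lt_of_le hs1 with hseq | hs2'
  · -- s = 1
    have hb12 : 0 ≤ (bz-1)*(bz-2) := by
      rcases le_or_gt bz 1 with h | h
      · have hbe : bz = 1 := le_antisymm h h10
        simp [hbe]
      · nlinarith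
    rw [← hseq] at key
    nlinarith only [key, hb12, h9, hc1, h14]
  · -- s ≥ 2
    have hss : 2 ≤ s := hs2'
    have hcs : (s+2)*(s+3) ≤ (cz+2)*(cz+3) := by
      nlinarith only [hs2, mul_nonneg (sub_nonneg.mpr hs2) (show (0:ℤ) ≤ cz+s+5 by omega)]
    have hb : -((s+1)^2) ≤ 4*(bz*(bz-1-s)) := by nlinarith only [sq_nonneg (2*bz - s - 1)]
    have hsp : (s-1)*((s+2)*(s+3)) ≤ (s-1)*pz :=
      mul_le_mul_of_nonneg_left (le_trans hcs h13) (by omega : (0:ℤ) ≤ s - 1)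
    have hWs : 0 ≤ (s-1)*W := mul_nonneg (by omega) hW0
    nlinarith only [key, hb, hsp, hWs, h14, hss,
      mul_nonneg (mul_nonneg (show (0:ℤ) ≤ s-2 by omega) (show (0:ℤ) ≤ s by omega)) (show (0:ℤ) ≤ s by omega),
      sq_nonneg (s-2)]

end Aux



/-- `N_G(v) ⊆ N_G(w)` for every `w ∉ N_G(v) ∪ {v}`. -/
theorem neighborSet_subset (n t : ℕ) (p : ℕ → ℕ) (ht : 2 ≤ t) (hp1 : 2 ≤ p 1)
    (hmono : ∀ i j, 1 ≤ i → i ≤ j → j ≤ t → p i ≤ p j)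
    (hn : 3 * (p 1 - 2) + ∑ i ∈ Finset.Icc 2 t, p i * (p i + 1) < n)
    (G : SimpleGraph (Fin n)) (hsat : IsSat G (cliqueUnion t p))
    (hE : G.edgeSet.ncard ≤ (Hgraph n t p).edgeSet.ncard)
    (v : Fin n)
    (hmin : ∀ u, (G.neighborSet v).ncard ≤ (G.neighborSet u).ncard) :
    ∀ w : Fin n, w ∉ G.neighborSet v → w ≠ v →
      G.neighborSet v ⊆ G.neighborSet w := by
  classical
  intro w hw hwv
  set c := p 1 - 2 with hc
  set P := ∑ i ∈ Finset.Icc 2 t, p i * (p i + 1) with hP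
  have hPn : 3 * c + P < n := hn
  have hn0 : 0 < n := by omega
  have hcn : c ≤ n := by omega
  set δ := G.degree v with hδdef
  set N := G.neighborFinset v with hN
  have hNcard : N.card = δ := rfl
  have hdeg_min : ∀ x : Fin n, δ ≤ G.degree x := by
    intro x
    have h1 := hmin x
    have h2 : ∀ y : Fin n, (G.neighborSet y).ncard = G.degree y := by
      intro y; rw [Set.ncard_eq_toFinset_card']; rfl
    rw [h2, h2] at h1
    exact h1
  have hEG : 2 * G.edgeFinset.card ≤ c * (n - 1) + c * (n - c) + P := by
    have h1 : G.edgeSet.ncard = G.edgeFinset.card := by rw [Set.ncard_eq_toFinset_card']; congr 1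
    have h2 := H_edge_bound (n := n) (t := t) p hcn
    calc 2 * G.edgeFinset.card = 2 * G.edgeSet.ncard := by rw [h1]
      _ ≤ 2 * (Hgraph n t p).edgeSet.ncard := Nat.mul_le_mul_left 2 hE
      _ ≤ c * (n - 1) + c * (n - c) + P := h2
  have handshake : ∑ x : Fin n, G.degree x = 2 * G.edgeFinset.card :=
    G.sum_degrees_eq_twice_card_edges
  have hδ2c : δ ≤ 2 * c := by
    have h1 : n * δ ≤ ∑ x : Fin n, G.degree x := by
      calc n * δ = ∑ _x : Fin n, δ := by
            rw [Finset.sum_const, card_univ, Fintype.card_fin, smul_eq_mul]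
        _ ≤ _ := Finset.sum_le_sum (fun x _ => hdeg_min x)
    have h2 : c * (n - 1) ≤ c * n := Nat.mul_le_mul_left _ (by omega)
    have h3 : c * (n - c) ≤ c * n := Nat.mul_le_mul_left _ (by omega)
    have h4 : n * δ < n * (2 * c + 1) := by
      calc n * δ ≤ c * (n-1) + c * (n-c) + P := le_trans h1 (by omega)
        _ ≤ c * n + c * n + P := by omega
        _ < c * n + c * n + n := by omega
        _ = n * (2 * c + 1) := by ring
    have := Nat.lt_of_mul_lt_mul_left h4
    omega
  have hnadjvw : ¬ G.Adj v w := fun h => hw h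
  obtain ⟨S, hScard, hSadj, hSclq⟩ := sat_pair hmono hsat (Ne.symm hwv) hnadjvw
  have hSsubN : S ⊆ N := by
    intro z hz
    rw [hN, SimpleGraph.mem_neighborFinset]
    exact (hSadj z hz).1
  by_cases hδc : δ ≤ c
  · -- small degree case : S = N
    have hcS : c ≤ S.card := by omega
    have hSeq : S = N := Finset.eq_of_subset_of_card_le hSsubN (by omega)
    intro u hu
    have huN : u ∈ N := by rwa [hN, SimpleGraph.mem_neighborFinset]
    rw [← hSeq] at huN
    exact (hSadj u huN).2
  · push_neg at hδc
    intro u hu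
    by_contra hunw
    have hadjvu : G.Adj v u := hu
    have huN : u ∈ N := by rwa [hN, SimpleGraph.mem_neighborFinset]
    have hnadjwu : ¬ G.Adj w u := fun h => hunw h
    have hune : u ≠ w := by rintro rfl; exact hnadjvw hadjvu
    have hnadjuw : ¬ G.Adj u w := fun h => hnadjwu h.symm
    obtain ⟨S', hS'card, hS'adj, hS'clq⟩ := sat_pair hmono hsat hune hnadjuw
    set W : Finset (Fin n) := univ \ insert v N with hW
    have hvN : v ∉ N := by
      rw [hN, SimpleGraph.mem_neighborFinset]
      exact G.irrefl
    have hmemW : ∀ x, x ∈ W ↔ (x ≠ v ∧ ¬ G.Adj v x) := by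
      intro x
      rw [hW]
      simp only [Finset.mem_sdiff, Finset.mem_univ, true_and, Finset.mem_insert, hN,
        SimpleGraph.mem_neighborFinset]
      tauto
    have hWcard : W.card + (δ + 1) = n := by
      have h1 : (insert v N).card = δ + 1 := by
        rw [Finset.card_insert_of_notMem hvN, hNcard]
      have h2 : (insert v N).card ≤ n := by
        have := Finset.card_le_card (Finset.subset_univ (insert v N))
        rwa [card_univ, Fintype.card_fin] at this
      rw [hW, Finset.card_sdiff_of_subset (Finset.subset_univ _), card_univ, Fintype.card_fin, h1]
      omega
    have hwW : w ∈ W := (hmemW w).mpr ⟨hwv, hnadjvw⟩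
    set m : Fin n → ℕ := fun x => (G.neighborFinset x ∩ N).card with hm
    have hmW : ∀ x ∈ W, c ≤ m x := by
      intro x hx
      obtain ⟨hxv, hxadj⟩ := (hmemW x).mp hx
      obtain ⟨Sx, hSxcard, hSxadj, -⟩ := sat_pair hmono hsat (Ne.symm hxv) hxadj
      have hsub : Sx ⊆ G.neighborFinset x ∩ N := by
        intro z hz
        rw [Finset.mem_inter, SimpleGraph.mem_neighborFinset, hN,
          SimpleGraph.mem_neighborFinset]
        exact ⟨(hSxadj z hz).2, (hSxadj z hz).1⟩
      have h9 := Finset.card_le_card hsub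
      show c ≤ (G.neighborFinset x ∩ N).card
      omega
    have hdegW : ∀ x ∈ W, G.degree x = m x + (G.neighborFinset x ∩ W).card := by
      intro x hx
      have hvx : v ∉ G.neighborFinset x := by
        rw [SimpleGraph.mem_neighborFinset]
        intro h
        exact ((hmemW x).mp hx).2 h.symm
      have h1 : (G.neighborFinset x ∩ insert v N).card +
          (G.neighborFinset x \ insert v N).card = (G.neighborFinset x).card :=
        Finset.card_inter_add_card_sdiff _ _
      have h2 : G.neighborFinset x ∩ insert v N = G.neighborFinset x ∩ N := by
        ext y
        simp only [Finset.mem_inter, Finset.mem_insert]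
        constructor
        · rintro ⟨hy, rfl | hy2⟩
          · exact absurd hy hvx
          · exact ⟨hy, hy2⟩
        · rintro ⟨hy, hy2⟩
          exact ⟨hy, Or.inr hy2⟩
      have h3 : G.neighborFinset x \ insert v N = G.neighborFinset x ∩ W := by
        ext y
        rw [hW]
        simp only [Finset.mem_sdiff, Finset.mem_inter, Finset.mem_univ, true_and] <;> tauto
      rw [h2, h3] at h1
      show G.degree x = (G.neighborFinset x ∩ N).card + (G.neighborFinset x ∩ W).card
      have hdd : G.degree x = (G.neighborFinset x).card := rfl
      omega
    have hdegN : ∀ x ∈ N, G.degree x =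
        1 + (G.neighborFinset x ∩ N).card + (G.neighborFinset x ∩ W).card := by
      intro x hx
      have hvx : v ∈ G.neighborFinset x := by
        rw [SimpleGraph.mem_neighborFinset]
        exact ((hN ▸ SimpleGraph.mem_neighborFinset G v x).mp hx).symm
      have h1 : (G.neighborFinset x ∩ insert v N).card +
          (G.neighborFinset x \ insert v N).card = (G.neighborFinset x).card :=
        Finset.card_inter_add_card_sdiff _ _
      have h2 : G.neighborFinset x ∩ insert v N = insert v (G.neighborFinset x ∩ N) := by
        ext y
        simp only [Finset.mem_inter, Finset.mem_insert]
        constructor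
        · rintro ⟨hy, rfl | hy2⟩
          · exact Or.inl rfl
          · exact Or.inr ⟨hy, hy2⟩
        · rintro (rfl | ⟨hy, hy2⟩)
          · exact ⟨hvx, Or.inl rfl⟩
          · exact ⟨hy, Or.inr hy2⟩
      have h3 : G.neighborFinset x \ insert v N = G.neighborFinset x ∩ W := by
        ext y
        rw [hW]
        simp only [Finset.mem_sdiff, Finset.mem_inter, Finset.mem_univ, true_and] <;> tauto
      have h4 : v ∉ G.neighborFinset x ∩ N := fun h => hvN (Finset.mem_inter.mp h).2
      rw [h2, h3, Finset.card_insert_of_notMem h4] at h1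
      have hdd : G.degree x = (G.neighborFinset x).card := rfl
      omega
    have hcross : ∑ x ∈ N, (G.neighborFinset x ∩ W).card = ∑ y ∈ W, m y := by
      have h1 : ∀ (x : Fin n) (s : Finset (Fin n)),
          (G.neighborFinset x ∩ s).card = ∑ y ∈ s, if G.Adj x y then 1 else 0 := by
        intro x s
        rw [← Finset.card_filter]
        congr 1
        ext y
        simp only [Finset.mem_inter, SimpleGraph.mem_neighborFinset, Finset.mem_filter]
        tauto
      have h2 : ∀ y x : Fin n, (if G.Adj x y then 1 else 0) = (if G.Adj y x then 1 else 0) := by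
        intro y x
        congr 1
        · exact propext (SimpleGraph.adj_comm G x y)
      calc ∑ x ∈ N, (G.neighborFinset x ∩ W).card
          = ∑ x ∈ N, ∑ y ∈ W, (if G.Adj x y then 1 else 0) := by
            exact Finset.sum_congr rfl (fun x _ => h1 x W)
        _ = ∑ y ∈ W, ∑ x ∈ N, (if G.Adj x y then 1 else 0) := Finset.sum_comm
        _ = ∑ y ∈ W, ∑ x ∈ N, (if G.Adj y x then 1 else 0) := by
            exact Finset.sum_congr rfl (fun y _ => Finset.sum_congr rfl (fun x _ => h2 y x))
        _ = ∑ y ∈ W, m y := by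
            exact Finset.sum_congr rfl (fun y _ => (h1 y N).symm)
    set a := (S' ∩ N).card with ha
    set K := insert w (S' ∩ W) with hK
    set b := K.card with hb
    have hwS' : w ∉ S' := fun h => G.irrefl ((hS'adj w h).2)
    have hvS' : v ∉ S' := fun h => hnadjvw ((hS'adj v h).2).symm
    have hbcard : b = (S' ∩ W).card + 1 := by
      rw [hb, hK, Finset.card_insert_of_notMem (fun h => hwS' (Finset.mem_inter.mp h).1)]
    have hS'NW : S'.card ≤ a + (S' ∩ W).card := by
      have hsub : S' ⊆ (S' ∩ N) ∪ (S' ∩ W) := by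
        intro z hz
        by_cases hzN : z ∈ N
        · exact Finset.mem_union_left _ (Finset.mem_inter.mpr ⟨hz, hzN⟩)
        · refine Finset.mem_union_right _ (Finset.mem_inter.mpr ⟨hz, ?_⟩)
          refine (hmemW z).mpr ⟨fun h => hvS' (h ▸ hz), fun h => hzN ?_⟩
          rw [hN, SimpleGraph.mem_neighborFinset]
          exact h
      calc S'.card ≤ ((S' ∩ N) ∪ (S' ∩ W)).card := Finset.card_le_card hsub
        _ ≤ a + (S' ∩ W).card := Finset.card_union_le _ _
    have hab : c + 1 ≤ a + b := by omega
    have hKsubW : K ⊆ W := by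
      rw [hK]
      intro z hz
      rcases Finset.mem_insert.mp hz with rfl | hz2
      · exact hwW
      · exact (Finset.mem_inter.mp hz2).2
    have hbW : b ≤ W.card := Finset.card_le_card hKsubW
    have hKclq : ∀ z ∈ K, ∀ z' ∈ K, z ≠ z' → G.Adj z z' := by
      intro z hz z' hz' hne'
      rcases Finset.mem_insert.mp hz with rfl | hzS
      · rcases Finset.mem_insert.mp hz' with rfl | hz'S
        · exact absurd rfl hne'
        · exact (hS'adj z' (Finset.mem_inter.mp hz'S).1).2
      · rcases Finset.mem_insert.mp hz' with rfl | hz'S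
        · exact ((hS'adj z (Finset.mem_inter.mp hzS).1).2).symm
        · exact hS'clq z (Finset.mem_inter.mp hzS).1 z' (Finset.mem_inter.mp hz'S).1 hne'
    have hKdeg : ∀ x ∈ K, b ≤ (G.neighborFinset x ∩ W).card + 1 := by
      intro x hx
      have hsub : K.erase x ⊆ G.neighborFinset x ∩ W := by
        intro z hz
        obtain ⟨hzx, hzK⟩ := Finset.mem_erase.mp hz
        refine Finset.mem_inter.mpr ⟨?_, hKsubW hzK⟩
        rw [SimpleGraph.mem_neighborFinset]
        exact hKclq x hx z hzK (Ne.symm hzx)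
      have h1 := Finset.card_le_card hsub
      rw [Finset.card_erase_of_mem hx] at h1
      omega
    have huS : u ∉ S := fun h => hnadjwu ((hSadj u h).2)
    have hBsum : a + S.card * (S.card - 1) ≤ ∑ x ∈ N, (G.neighborFinset x ∩ N).card := by
      have husub : insert u S ⊆ N := by
        rw [Finset.insert_subset_iff]
        exact ⟨huN, hSsubN⟩
      have hua : a ≤ (G.neighborFinset u ∩ N).card := by
        refine Finset.card_le_card ?_
        intro z hz
        obtain ⟨hz1, hz2⟩ := Finset.mem_inter.mp hz
        refine Finset.mem_inter.mpr ⟨?_, hz2⟩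
        rw [SimpleGraph.mem_neighborFinset]
        exact (hS'adj z hz1).1
      have hSx : ∀ x ∈ S, S.card - 1 ≤ (G.neighborFinset x ∩ N).card := by
        intro x hx
        have hsub : S.erase x ⊆ G.neighborFinset x ∩ N := by
          intro z hz
          obtain ⟨hzx, hzS⟩ := Finset.mem_erase.mp hz
          refine Finset.mem_inter.mpr ⟨?_, hSsubN hzS⟩
          rw [SimpleGraph.mem_neighborFinset]
          exact hSclq x hx z hzS (Ne.symm hzx)
        have := Finset.card_le_card hsub
        rwa [Finset.card_erase_of_mem hx] at this
      have h7 : S.card * (S.card - 1) ≤ ∑ x ∈ S, (G.neighborFinset x ∩ N).card := by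
        calc S.card * (S.card - 1) = ∑ _x ∈ S, (S.card - 1) := by
              rw [Finset.sum_const, smul_eq_mul]
          _ ≤ ∑ x ∈ S, (G.neighborFinset x ∩ N).card := Finset.sum_le_sum hSx
      have hsub2 : S ⊆ N.erase u := fun z hz =>
        Finset.mem_erase.mpr ⟨fun h => huS (h ▸ hz), hSsubN hz⟩
      have h5 : ∑ x ∈ S, (G.neighborFinset x ∩ N).card ≤
          ∑ x ∈ N.erase u, (G.neighborFinset x ∩ N).card :=
        Finset.sum_le_sum_of_subset hsub2
      have h6 : (G.neighborFinset u ∩ N).card +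
          ∑ x ∈ N.erase u, (G.neighborFinset x ∩ N).card =
          ∑ x ∈ N, (G.neighborFinset x ∩ N).card :=
        Finset.add_sum_erase N (fun x => (G.neighborFinset x ∩ N).card) huN
      omega
    have hWsum : (W.card - b) * (c + δ) + b * (2*c + (b-1)) ≤
        ∑ y ∈ W, (m y + G.degree y) := by
      have hsplit : ∑ y ∈ W \ K, (m y + G.degree y) + ∑ y ∈ K, (m y + G.degree y) =
          ∑ y ∈ W, (m y + G.degree y) := Finset.sum_sdiff hKsubW
      have h1 : (W.card - b) * (c + δ) ≤ ∑ y ∈ W \ K, (m y + G.degree y) := by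
        have hcd : ∀ y ∈ W \ K, c + δ ≤ m y + G.degree y := by
          intro y hy
          have hyW : y ∈ W := (Finset.mem_sdiff.mp hy).1
          exact Nat.add_le_add (hmW y hyW) (hdeg_min y)
        calc (W.card - b) * (c + δ) = ∑ _y ∈ W \ K, (c + δ) := by
              rw [Finset.sum_const, Finset.card_sdiff_of_subset hKsubW, smul_eq_mul, hb]
          _ ≤ _ := Finset.sum_le_sum hcd
      have h2 : b * (2*c + (b-1)) ≤ ∑ y ∈ K, (m y + G.degree y) := by
        have hcd : ∀ y ∈ K, 2*c + (b-1) ≤ m y + G.degree y := by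
          intro y hy
          have hyW : y ∈ W := hKsubW hy
          have e1 : G.degree y = m y + (G.neighborFinset y ∩ W).card := hdegW y hyW
          have e2 := hKdeg y hy
          have e3 := hmW y hyW
          omega
        calc b * (2*c + (b-1)) = ∑ _y ∈ K, (2*c + (b-1)) := by
              rw [Finset.sum_const, smul_eq_mul, hb]
          _ ≤ _ := Finset.sum_le_sum hcd
      omega
    have huniv : ∑ x : Fin n, G.degree x =
        G.degree v + ∑ x ∈ N, G.degree x + ∑ y ∈ W, G.degree y := by
      have h0 : ∑ y ∈ W, G.degree y + ∑ x ∈ insert v N, G.degree x =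
          ∑ x : Fin n, G.degree x := by
        rw [hW]
        exact Finset.sum_sdiff (Finset.subset_univ _)
      rw [Finset.sum_insert hvN] at h0
      omega
    have hNdegsum : ∑ x ∈ N, G.degree x =
        δ + ∑ x ∈ N, (G.neighborFinset x ∩ N).card + ∑ x ∈ N, (G.neighborFinset x ∩ W).card := by
      calc ∑ x ∈ N, G.degree x
          = ∑ x ∈ N, (1 + (G.neighborFinset x ∩ N).card + (G.neighborFinset x ∩ W).card) :=
            Finset.sum_congr rfl (fun x hx => hdegN x hx)
        _ = ∑ _x ∈ N, 1 + ∑ x ∈ N, (G.neighborFinset x ∩ N).card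
            + ∑ x ∈ N, (G.neighborFinset x ∩ W).card := by
            rw [← Finset.sum_add_distrib, ← Finset.sum_add_distrib]
        _ = δ + ∑ x ∈ N, (G.neighborFinset x ∩ N).card
            + ∑ x ∈ N, (G.neighborFinset x ∩ W).card := by
            rw [Finset.sum_const, smul_eq_mul, mul_one, hNcard]
    have hmain : 2 * G.edgeFinset.card =
        2 * δ + ∑ x ∈ N, (G.neighborFinset x ∩ N).card + ∑ y ∈ W, (m y + G.degree y) := by
      have hms : ∑ y ∈ W, (m y + G.degree y) = ∑ y ∈ W, m y + ∑ y ∈ W, G.degree y :=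
        Finset.sum_add_distrib
      rw [← handshake, huniv, hNdegsum, hcross, hms]
      omega
    -- cast to ℤ and derive the contradiction
    have hS'c : c ≤ S'.card := by omega
    have hSc : c ≤ S.card := by omega
    have hScpos : 1 ≤ S.card := by omega
    have hbpos : 1 ≤ b := by omega
    have hP13 : (c+2)*(c+3) ≤ P := by
      have h2t : 2 ∈ Finset.Icc 2 t := Finset.mem_Icc.mpr ⟨le_rfl, ht⟩
      have hp2 : p 1 ≤ p 2 := hmono 1 2 le_rfl (by omega) ht
      have h1 : p 2 * (p 2 + 1) ≤ P := by
        rw [hP]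
        exact Finset.single_le_sum (f := fun i => p i * (p i + 1))
          (fun i _ => Nat.zero_le _) h2t
      have h2 : (c+2)*(c+3) ≤ p 2 * (p 2 + 1) := by
        have e1 : c + 2 = p 1 := by omega
        have e2 : c + 3 = p 1 + 1 := by omega
        rw [e1, e2]
        exact Nat.mul_le_mul hp2 (by omega)
      omega
    exfalso
    refine final_numeric (c : ℤ) (δ : ℤ) (a : ℤ) (b : ℤ) (S.card : ℤ) (W.card : ℤ)
      (n : ℤ) (P : ℤ) ((∑ x ∈ N, (G.neighborFinset x ∩ N).card : ℕ) : ℤ)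
      ((∑ y ∈ W, (m y + G.degree y) : ℕ) : ℤ) ((G.edgeFinset.card : ℕ) : ℤ)
      ?_ ?_ ?_ ?_ ?_ ?_ ?_ ?_ ?_ ?_ ?_ ?_ ?_ ?_
    · exact_mod_cast congrArg (Nat.cast : ℕ → ℤ) hmain
    · have := hEG
      zify [show 1 ≤ n by omega, hcn] at this
      exact this
    · have := hBsum
      zify [hScpos] at this
      push_cast
      linarith [this]
    · have := hWsum
      zify [hbW, hbpos] at this
      push_cast
      linarith [this]
    · exact_mod_cast congrArg (Nat.cast : ℕ → ℤ) hWcard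
    · exact_mod_cast hδc
    · exact_mod_cast hδ2c
    · exact_mod_cast hSc
    · exact_mod_cast hab
    · exact_mod_cast hbpos
    · exact_mod_cast hbW
    · exact_mod_cast hPn
    · exact_mod_cast hP13
    · exact Int.ofNat_nonneg a
end

section
/- Suppose t ≥ 2, n > 3(p_1 - 2) + Σ_{i=2}^t p_i(p_i+1), G is a (K_{p_1} ∪ ... ∪ K_{p_t})-saturated graph of order n with e(G) ≤ e(H(n; p_1, ..., p_t)), and v is a minimum-degree vertex of G with neighborhood S. Then the number of edges of the induced subgraph G[V(G) \ S] is at most Σ_{i=2}^t C(p_i+1, 2). -/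
open SimpleGraph Finset

/-- Core extraction: from an embedding of the clique union into `G + uv` that does not
embed into `G`, get a common-neighbor clique. -/
lemma sat_clique {n t : ℕ} {p : ℕ → ℕ} {G : SimpleGraph (Fin n)}
    (hsat : IsSat G (cliqueUnion t p))
    (hmono : ∀ i j, 1 ≤ i → i ≤ j → j ≤ t → p i ≤ p j)
    {u v : Fin n} (huv : u ≠ v) (hna : ¬ G.Adj u v) :
    ∃ T : Finset (Fin n), (p 1 - 2) ≤ T.card ∧ (∀ x ∈ T, G.Adj v x) ∧
      (∀ x ∈ T, G.Adj u x) ∧ ∀ x ∈ T, ∀ y ∈ T, x ≠ y → G.Adj x y := by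
  classical
  obtain ⟨hfree, hadd⟩ := hsat
  obtain ⟨f, hinj, hhom⟩ := hadd u v huv hna
  by_cases hall : ∀ a b, (cliqueUnion t p).Adj a b → G.Adj (f a) (f b)
  · exact absurd ⟨f, hinj, hall⟩ hfree
  push_neg at hall
  obtain ⟨a, b, hab, hnG⟩ := hall
  have h' := hhom a b hab
  rw [SimpleGraph.sup_adj, SimpleGraph.fromEdgeSet_adj] at h'
  obtain hG | ⟨hmem, hne⟩ := h'
  · exact absurd hG hnG
  rw [Set.mem_singleton_iff, Sym2.eq_iff] at hmem
  -- core construction, parametric in the two cases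
  have core : ∀ a b : (Σ i : Fin t, Fin (p ((i : ℕ) + 1))),
      (cliqueUnion t p).Adj a b → f a = u → f b = v →
      ∃ T : Finset (Fin n), (p 1 - 2) ≤ T.card ∧ (∀ x ∈ T, G.Adj v x) ∧
        (∀ x ∈ T, G.Adj u x) ∧ ∀ x ∈ T, ∀ y ∈ T, x ≠ y → G.Adj x y := by
    intro a b hab hfa hfb
    set i0 : Fin t := a.1 with hi0
    set Q : Finset (Fin (p ((i0 : ℕ) + 1))) :=
      univ.filter (fun z => f ⟨i0, z⟩ ≠ u ∧ f ⟨i0, z⟩ ≠ v) with hQ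
    refine ⟨Q.image (fun z => f ⟨i0, z⟩), ?_, ?_, ?_, ?_⟩
    · -- cardinality
      have hinj2 : Function.Injective (fun z : Fin (p ((i0 : ℕ) + 1)) => f ⟨i0, z⟩) :=
        fun z z' h => by
          exact @sigma_mk_injective (Fin t) (fun i => Fin (p ((i : ℕ) + 1))) i0 _ _ (hinj h)
      rw [Finset.card_image_of_injective _ hinj2, hQ]
      have hcompl : (univ.filter (fun z : Fin (p ((i0 : ℕ) + 1)) =>
          ¬(f ⟨i0, z⟩ ≠ u ∧ f ⟨i0, z⟩ ≠ v))).card ≤ 2 := by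
        have : (univ.filter (fun z : Fin (p ((i0 : ℕ) + 1)) =>
            ¬(f ⟨i0, z⟩ ≠ u ∧ f ⟨i0, z⟩ ≠ v))).card ≤ ({u, v} : Finset (Fin n)).card := by
          apply Finset.card_le_card_of_injOn (fun z => f ⟨i0, z⟩)
          · intro z hz
            simp only [Finset.mem_coe, mem_filter, not_and, not_not] at hz
            simp only [Finset.mem_coe, mem_insert, mem_singleton]
            rcases Classical.em (f ⟨i0, z⟩ = u) with h | h
            · exact Or.inl h
            · exact Or.inr (hz.2 h)
          · intro z hz z' hz' h
            exact @sigma_mk_injective (Fin t) (fun i => Fin (p ((i : ℕ) + 1))) i0 _ _ (hinj h)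
        calc _ ≤ ({u, v} : Finset (Fin n)).card := this
          _ ≤ 2 := Finset.card_insert_le _ _ |>.trans (by simp)
      have htot := Finset.card_filter_add_card_filter_not
        (s := (univ : Finset (Fin (p ((i0 : ℕ) + 1)))))
        (p := fun z => f ⟨i0, z⟩ ≠ u ∧ f ⟨i0, z⟩ ≠ v)
      have hcard : (univ : Finset (Fin (p ((i0 : ℕ) + 1)))).card = p ((i0 : ℕ) + 1) := by
        simp
      have hp1i : p 1 ≤ p ((i0 : ℕ) + 1) := by
        apply hmono 1 ((i0 : ℕ) + 1) le_rfl (by omega)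
        have := i0.isLt
        omega
      omega
    · -- adj to v
      intro x hx
      simp only [Finset.mem_image, hQ, mem_filter] at hx
      obtain ⟨z, ⟨_, hzu, hzv⟩, rfl⟩ := hx
      have hadjF : (cliqueUnion t p).Adj ⟨i0, z⟩ b := by
        change _ ∧ _
        constructor
        · intro h; rw [h] at hzv; exact hzv hfb
        · exact hab.2
      have := hhom _ _ hadjF
      rw [SimpleGraph.sup_adj, SimpleGraph.fromEdgeSet_adj] at this
      obtain hG | ⟨hm, _⟩ := this
      · rw [hfb] at hG; exact hG.symm
      · rw [Set.mem_singleton_iff, Sym2.eq_iff, hfb] at hm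
        exfalso
        rcases hm with ⟨h1, h2⟩ | ⟨h1, h2⟩
        · exact hzu h1
        · exact huv h2.symm
    · -- adj to u
      intro x hx
      simp only [Finset.mem_image, hQ, mem_filter] at hx
      obtain ⟨z, ⟨_, hzu, hzv⟩, rfl⟩ := hx
      have hadjF : (cliqueUnion t p).Adj ⟨i0, z⟩ a := by
        change _ ∧ _
        constructor
        · intro h; rw [h] at hzu; exact hzu hfa
        · rfl
      have := hhom _ _ hadjF
      rw [SimpleGraph.sup_adj, SimpleGraph.fromEdgeSet_adj] at this
      obtain hG | ⟨hm, _⟩ := this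
      · rw [hfa] at hG; exact hG.symm
      · rw [Set.mem_singleton_iff, Sym2.eq_iff, hfa] at hm
        exfalso
        rcases hm with ⟨h1, h2⟩ | ⟨h1, h2⟩
        · exact hzu h1
        · exact hzv h1
    · -- clique
      intro x hx y hy hxy
      simp only [Finset.mem_image, hQ, mem_filter] at hx hy
      obtain ⟨z, ⟨_, hzu, hzv⟩, rfl⟩ := hx
      obtain ⟨z', ⟨_, hzu', hzv'⟩, rfl⟩ := hy
      have hzz : z ≠ z' := by intro h; rw [h] at hxy; exact hxy rfl
      have hadjF : (cliqueUnion t p).Adj ⟨i0, z⟩ ⟨i0, z'⟩ := by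
        change _ ∧ _
        refine ⟨?_, rfl⟩
        intro h
        exact hzz (@sigma_mk_injective (Fin t) (fun i => Fin (p ((i : ℕ) + 1))) i0 _ _ h)
      have := hhom _ _ hadjF
      rw [SimpleGraph.sup_adj, SimpleGraph.fromEdgeSet_adj] at this
      obtain hG | ⟨hm, _⟩ := this
      · exact hG
      · rw [Set.mem_singleton_iff, Sym2.eq_iff] at hm
        exfalso
        rcases hm with ⟨h1, h2⟩ | ⟨h1, h2⟩
        · exact hzu h1
        · exact hzv h1
  rcases hmem with ⟨h1, h2⟩ | ⟨h1, h2⟩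
  · exact core a b hab h1 h2
  · exact core b a hab.symm h2 h1

lemma two_ncard_edge {V : Type*} [Fintype V] [DecidableEq V] (Γ : SimpleGraph V)
    [DecidableRel Γ.Adj] :
    2 * Γ.edgeSet.ncard = (univ.filter fun pr : V × V => Γ.Adj pr.1 pr.2).card := by
  rw [← SimpleGraph.coe_edgeFinset, Set.ncard_coe_finset,
    SimpleGraph.two_mul_card_edgeFinset]


lemma filter_val_lt_card {n q : ℕ} (h : q ≤ n) :
    (univ.filter fun x : Fin n => (x : ℕ) < q).card = q := by
  have : (univ.filter fun x : Fin n => (x : ℕ) < q).card = (Finset.range q).card := by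
    apply Finset.card_bij (fun (x : Fin n) _ => (x : ℕ))
    · intro a ha; simp only [mem_filter] at ha; simp [ha.2]
    · intro a _ b _ hab; exact Fin.val_injective hab
    · intro b hb
      simp only [Finset.mem_range] at hb
      exact ⟨⟨b, lt_of_lt_of_le hb h⟩, by simp [hb], rfl⟩
  simpa using this


lemma block_card_le {n : ℕ} (p : ℕ → ℕ) (i : ℕ) (s : Finset (Fin n))
    (hs : ∀ x ∈ s, inBlock p i (x : ℕ)) : s.card ≤ p i + 1 := by
  classical
  rw [← Finset.card_range (p i + 1)]
  refine Finset.card_le_card_of_injOn (fun x => (x : ℕ) - blockStart p i) ?_ ?_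
  · intro x hx
    obtain ⟨h1, h2⟩ := hs x hx
    simp only [Finset.mem_coe, Finset.mem_range]
    omega
  · intro x hx y hy hxy
    simp only [Finset.mem_coe] at hx hy
    obtain ⟨h1, -⟩ := hs x hx
    obtain ⟨h3, -⟩ := hs y hy
    apply Fin.val_injective
    simp only at hxy
    omega


lemma Hbound (n t : ℕ) (p : ℕ → ℕ) (hq : p 1 - 2 ≤ n) :
    2 * (Hgraph n t p).edgeSet.ncard + (p 1 - 2) * (p 1 - 2 - 1) ≤
      2 * ((p 1 - 2) * (n - 1)) + ∑ i ∈ Finset.Icc 2 t, (p i + 1) * p i := by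
  classical
  set q := p 1 - 2 with hqdef
  rw [two_ncard_edge]
  set Qf := univ.filter fun x : Fin n => (x : ℕ) < q with hQf
  set A := (univ : Finset (Fin n × Fin n)).filter
    (fun pr => pr.1 ≠ pr.2 ∧ (pr.1 : ℕ) < q) with hA
  set A' := (univ : Finset (Fin n × Fin n)).filter
    (fun pr => pr.1 ≠ pr.2 ∧ (pr.2 : ℕ) < q) with hA'
  set P1 := A ∪ A' with hP1
  set P2 := fun i => (univ : Finset (Fin n × Fin n)).filter
    (fun pr => pr.1 ≠ pr.2 ∧ inBlock p i (pr.1 : ℕ) ∧ inBlock p i (pr.2 : ℕ)) with hP2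
  -- the dart set is contained in P1 ∪ ⋃ P2 i
  have hsub : (univ.filter fun pr : Fin n × Fin n => (Hgraph n t p).Adj pr.1 pr.2) ⊆
      P1 ∪ (Finset.Icc 2 t).biUnion P2 := by
    intro pr hpr
    simp only [mem_filter, mem_univ, true_and] at hpr
    rw [Hgraph, SimpleGraph.fromRel_adj] at hpr
    obtain ⟨hne, hcase⟩ := hpr
    simp only [Finset.mem_union, Finset.mem_biUnion]
    rcases hcase with (h | ⟨i, h2, ht', hb1, hb2⟩) | (h | ⟨i, h2, ht', hb1, hb2⟩)
    · exact Or.inl (Finset.mem_union.2 (Or.inl (by simp [hA, hne, h, hqdef])))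
    · exact Or.inr ⟨i, by simp [Finset.mem_Icc, h2, ht'], by simp [hP2, hne, hb1, hb2]⟩
    · exact Or.inl (Finset.mem_union.2 (Or.inr (by simp [hA', hne, h, hqdef])))
    · exact Or.inr ⟨i, by simp [Finset.mem_Icc, h2, ht'], by simp [hP2, hne, hb1, hb2]⟩
  have hcard : (univ.filter fun pr : Fin n × Fin n => (Hgraph n t p).Adj pr.1 pr.2).card ≤
      P1.card + ∑ i ∈ Finset.Icc 2 t, (P2 i).card := by
    calc _ ≤ (P1 ∪ (Finset.Icc 2 t).biUnion P2).card := Finset.card_le_card hsub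
      _ ≤ P1.card + ((Finset.Icc 2 t).biUnion P2).card := Finset.card_union_le _ _
      _ ≤ _ := by
          gcongr
          exact Finset.card_biUnion_le
  -- card of A
  have hQfcard : Qf.card = q := filter_val_lt_card hq
  have hAcard : A.card = q * (n - 1) := by
    have : A = Qf.biUnion (fun a => {a} ×ˢ (univ.erase a)) := by
      ext pr
      simp only [hA, mem_filter, mem_univ, true_and, Finset.mem_biUnion, Finset.mem_product,
        Finset.mem_singleton, Finset.mem_erase, hQf]
      constructor
      · rintro ⟨h1, h2⟩
        exact ⟨pr.1, h2, rfl, Ne.symm h1, trivial⟩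
      · rintro ⟨a, hlt, heq, hne, -⟩
        refine ⟨?_, by rw [heq]; exact hlt⟩
        intro h
        exact hne (by rw [← h, heq])
    rw [this, Finset.card_biUnion]
    · rw [← hQfcard, ← Finset.sum_const_nat]
      intro x hx
      rw [Finset.card_product]
      simp [Finset.card_erase_of_mem]
    · intro x _ y _ hxy
      simp only [Finset.disjoint_left]
      rintro pr hpr hpr'
      simp only [Finset.mem_product, Finset.mem_singleton] at hpr hpr'
      exact hxy (hpr.1 ▸ hpr'.1 ▸ rfl)
  have hA'card : A'.card = q * (n - 1) := by
    rw [← hAcard]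
    apply Finset.card_bij' (fun pr _ => Prod.swap pr) (fun pr _ => Prod.swap pr)
    · intro a ha
      simp only [hA', mem_filter, mem_univ, true_and] at ha
      simp only [hA, mem_filter, mem_univ, true_and, Prod.fst_swap, Prod.snd_swap]
      exact ⟨Ne.symm ha.1, ha.2⟩
    · intro a ha
      simp only [hA, mem_filter, mem_univ, true_and] at ha
      simp only [hA', mem_filter, mem_univ, true_and, Prod.fst_swap, Prod.snd_swap]
      exact ⟨Ne.symm ha.1, ha.2⟩
    · intro a _; exact Prod.swap_swap a
    · intro a _; exact Prod.swap_swap a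
  have hinter : (A ∩ A').card = q * q - q := by
    have : A ∩ A' = Qf.offDiag := by
      ext pr
      simp only [hA, hA', Finset.mem_inter, mem_filter, mem_univ, true_and,
        Finset.mem_offDiag, hQf]
      constructor
      · rintro ⟨⟨h1, h2⟩, -, h3⟩
        exact ⟨h2, h3, h1⟩
      · rintro ⟨h1, h2, h3⟩
        exact ⟨⟨h3, h1⟩, h3, h2⟩
    rw [this, Finset.offDiag_card, hQfcard]
  have hP1card : P1.card + (q * q - q) = 2 * (q * (n - 1)) := by
    have := Finset.card_union_add_card_inter A A'
    rw [hAcard, hA'card, hinter] at this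
    rw [hP1]
    omega
  -- P2 cards
  have hP2card : ∀ i, (P2 i).card ≤ (p i + 1) * p i := by
    intro i
    have hsub2 : P2 i ⊆ (univ.filter fun x : Fin n => inBlock p i (x : ℕ)).offDiag := by
      intro pr hpr
      simp only [hP2, mem_filter, mem_univ, true_and] at hpr
      simp only [Finset.mem_offDiag, mem_filter, mem_univ, true_and]
      exact ⟨hpr.2.1, hpr.2.2, hpr.1⟩
    calc (P2 i).card ≤ _ := Finset.card_le_card hsub2
      _ ≤ (p i + 1) * p i := by
          rw [Finset.offDiag_card]
          have hk := block_card_le (n := n) p i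
            (univ.filter fun x : Fin n => inBlock p i (x : ℕ))
            (fun x hx => (mem_filter.mp hx).2)
          set k := (univ.filter fun x : Fin n => inBlock p i (x : ℕ)).card with hkdef
          have h2 : k * k - k = k * (k - 1) := by
            cases k with
            | zero => simp
            | succ s => simp only [Nat.succ_sub_one, Nat.mul_succ]; omega
          rw [h2]
          exact Nat.mul_le_mul hk (by omega)
  have hsum : ∑ i ∈ Finset.Icc 2 t, (P2 i).card ≤ ∑ i ∈ Finset.Icc 2 t, (p i + 1) * p i :=
    Finset.sum_le_sum fun i _ => hP2card i
  -- q * q - q vs q * (q - 1)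
  have hqq : q * (q - 1) = q * q - q := by
    cases q with
    | zero => simp
    | succ k => rw [Nat.succ_sub_one, Nat.mul_succ]; omega
  omega

lemma mul_pred_eq (k : ℕ) : k * (k - 1) = k * k - k := by
  cases k with
  | zero => simp
  | succ s => simp only [Nat.succ_sub_one, Nat.mul_succ]; omega


set_option maxHeartbeats 2000000 in
/-- The induced subgraph on `V(G) \ S` has at most `Σ_{i=2}^t C(p_i+1, 2)` edges. -/
theorem induced_edge_bound (n t : ℕ) (p : ℕ → ℕ) (ht : 2 ≤ t) (hp1 : 2 ≤ p 1)
    (hmono : ∀ i j, 1 ≤ i → i ≤ j → j ≤ t → p i ≤ p j)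
    (hn : 3 * (p 1 - 2) + ∑ i ∈ Finset.Icc 2 t, p i * (p i + 1) < n)
    (G : SimpleGraph (Fin n)) (hsat : IsSat G (cliqueUnion t p))
    (hE : G.edgeSet.ncard ≤ (Hgraph n t p).edgeSet.ncard)
    (v : Fin n)
    (hmin : ∀ u, (G.neighborSet v).ncard ≤ (G.neighborSet u).ncard) :
    ((G.induce ((G.neighborSet v)ᶜ)).edgeSet.ncard ≤
      ∑ i ∈ Finset.Icc 2 t, (p i + 1).choose 2) := by
  classical
  set q := p 1 - 2 with hqdef
  set c := ∑ i ∈ Finset.Icc 2 t, (p i + 1).choose 2 with hcdef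
  set m := (G.induce ((G.neighborSet v)ᶜ)).edgeSet.ncard with hmdef
  set E := G.edgeSet.ncard with hEdef
  set Hc := (Hgraph n t p).edgeSet.ncard with hHdef
  -- choose facts
  have hchoose : ∀ k : ℕ, 2 * ((k + 1).choose 2) = (k + 1) * k := by
    intro k
    rw [Nat.choose_two_right]
    simp only [Nat.add_sub_cancel]
    have h2 : 2 ∣ (k + 1) * k := by
      rcases Nat.even_mul_succ_self k with ⟨w, hw⟩
      have hcm : (k + 1) * k = k * (k + 1) := Nat.mul_comm _ _
      exact ⟨w, by omega⟩
    exact Nat.mul_div_cancel' h2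
  have h2c : 2 * c = ∑ i ∈ Finset.Icc 2 t, (p i + 1) * p i := by
    rw [hcdef, Finset.mul_sum]
    exact Finset.sum_congr rfl fun i _ => hchoose (p i)
  have hn2 : 3 * q + 2 * c < n := by
    have : ∑ i ∈ Finset.Icc 2 t, p i * (p i + 1) = 2 * c := by
      rw [h2c]; exact Finset.sum_congr rfl fun i _ => Nat.mul_comm _ _
    omega
  have hp2q : q + 2 ≤ p 2 := by
    have := hmono 1 2 le_rfl (by norm_num) ht
    omega
  have hc2 : (q + 2) * (q + 3) ≤ 2 * c := by
    have h2t : 2 ∈ Finset.Icc 2 t := by simp [Finset.mem_Icc, ht]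
    have hle : (p 2 + 1) * p 2 ≤ 2 * c := by
      rw [h2c]
      exact Finset.single_le_sum (f := fun i => (p i + 1) * p i)
        (fun i _ => Nat.zero_le _) h2t
    have : (q + 2) * (q + 3) ≤ (p 2 + 1) * p 2 := by
      calc (q + 2) * (q + 3) = (q + 3) * (q + 2) := Nat.mul_comm _ _
        _ ≤ (p 2 + 1) * p 2 := Nat.mul_le_mul (by omega) (by omega)
    omega
  have h6 : 6 ≤ (q + 2) * (q + 3) := by
    have := Nat.mul_le_mul (show 2 ≤ q + 2 by omega) (show 3 ≤ q + 3 by omega)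
    omega
  have hqn : q ≤ n := by omega
  -- basic finsets
  set S : Finset (Fin n) := univ.filter (fun x => G.Adj v x) with hSdef
  set d := S.card with hddef
  have hvS : v ∉ S := by
    rw [hSdef]
    simp only [Finset.mem_filter, Finset.mem_univ, true_and]
    exact G.irrefl
  set B : Finset (Fin n) := univ \ insert v S with hBdef
  set N := B.card with hNdef
  have hvB : v ∉ B := by
    rw [hBdef]
    simp
  have hSB : ∀ x, x ∈ S → x ∉ B := by
    intro x hx
    rw [hBdef]
    simp [hx]
  have hmemB : ∀ x, x ∈ B ↔ (x ≠ v ∧ ¬ G.Adj v x) := by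
    intro x
    rw [hBdef, hSdef]
    constructor
    · intro h
      rw [Finset.mem_sdiff] at h
      exact ⟨fun hh => h.2 (by rw [hh]; exact Finset.mem_insert_self _ _),
        fun hh => h.2 (Finset.mem_insert_of_mem (by simp [hh]))⟩
    · intro h
      rw [Finset.mem_sdiff]
      refine ⟨Finset.mem_univ _, fun hh => ?_⟩
      rcases Finset.mem_insert.mp hh with h1 | h1
      · exact h.1 h1
      · exact h.2 (by simpa using h1)
  have hd1n : d + 1 ≤ n := by
    have h1 : (insert v S).card = d + 1 := by
      rw [Finset.card_insert_of_notMem hvS]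
    have h2 := Finset.card_le_univ (insert v S)
    simp only [Finset.card_univ, Fintype.card_fin] at h2
    omega
  have hNval : N + (d + 1) = n := by
    rw [hNdef, hBdef, Finset.card_sdiff_of_subset (Finset.subset_univ _),
      Finset.card_insert_of_notMem hvS]
    simp only [Finset.card_univ, Fintype.card_fin]
    omega
  -- degrees
  have hnbr : ∀ u : Fin n, G.neighborSet u = ↑(univ.filter (fun x => G.Adj u x)) := by
    intro u
    ext x
    simp [SimpleGraph.mem_neighborSet]
  have hdeg : ∀ u : Fin n, d ≤ (univ.filter (fun x => G.Adj u x)).card := by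
    intro u
    have := hmin u
    rw [hnbr v, hnbr u, Set.ncard_coe_finset, Set.ncard_coe_finset] at this
    exact this
  -- dart set
  set R := (univ : Finset (Fin n × Fin n)).filter (fun pr => G.Adj pr.1 pr.2) with hRdef
  have hRE : R.card = 2 * E := by
    rw [hEdef, two_ncard_edge G]
  -- R restricted to first coordinate in a set A equals biUnion
  have hbiU : ∀ A : Finset (Fin n), R.filter (fun pr => pr.1 ∈ A) =
      A.biUnion (fun u => {u} ×ˢ (univ.filter (fun x => G.Adj u x))) := by
    intro A
    ext pr
    simp only [hRdef, Finset.mem_filter, Finset.mem_univ, true_and, Finset.mem_biUnion,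
      Finset.mem_product, Finset.mem_singleton]
    constructor
    · rintro ⟨hadj, hmem⟩
      exact ⟨pr.1, hmem, rfl, hadj⟩
    · rintro ⟨u, hu, rfl, hx⟩
      exact ⟨hx, hu⟩
  have hdisjfst : ∀ (A : Finset (Fin n)) (f : Fin n → Finset (Fin n)), ∀ x ∈ A, ∀ y ∈ A,
      x ≠ y → Disjoint ({x} ×ˢ f x) ({y} ×ˢ f y) := by
    intro A f x _ y _ hxy
    simp only [Finset.disjoint_left]
    rintro pr hpr hpr'
    simp only [Finset.mem_product, Finset.mem_singleton] at hpr hpr'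
    exact hxy (hpr.1 ▸ hpr'.1 ▸ rfl)
  have hbiUcard : ∀ A : Finset (Fin n), A.card * d ≤ (R.filter (fun pr => pr.1 ∈ A)).card := by
    intro A
    rw [hbiU A, Finset.card_biUnion (hdisjfst A _)]
    calc A.card * d = ∑ _u ∈ A, d := by rw [Finset.sum_const, smul_eq_mul]
      _ ≤ ∑ u ∈ A, ({u} ×ˢ (univ.filter (fun x => G.Adj u x))).card :=
          Finset.sum_le_sum fun u _ => by
            rw [Finset.card_product, Finset.card_singleton, one_mul]; exact hdeg u
  -- minimum degree bounds: d ≤ 2q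
  have hHb : 2 * Hc + q * (q - 1) ≤ 2 * (q * (n - 1)) + 2 * c := by
    have hb := Hbound n t p hqn
    rw [← hqdef, ← h2c, ← hHdef] at hb
    exact hb
  have hd2q : d ≤ 2 * q := by
    by_contra hcon
    push_neg at hcon
    have h1 : n * (2 * q + 1) ≤ n * d := Nat.mul_le_mul_left n (by omega)
    have h2 : n * d ≤ R.card := by
      have := hbiUcard univ
      have heq : R.filter (fun pr => pr.1 ∈ (univ : Finset (Fin n))) = R :=
        Finset.filter_true_of_mem (fun _ _ => Finset.mem_univ _)
      rw [heq] at this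
      simpa [Finset.card_univ, Fintype.card_fin] using this
    have h3 : n * (2 * q + 1) = 2 * (q * n) + n := by ring
    have h4 : q * (n - 1) + q = q * n := by
      obtain ⟨w, rfl⟩ : ∃ w, n = w + 1 := ⟨n - 1, by omega⟩
      simp [Nat.mul_succ]
    omega
  -- B is nonempty
  have hNbig : q + 2 * c ≤ N := by omega
  have hBne : B.Nonempty := Finset.card_pos.mp (by omega)
  -- saturation facts
  have fact1 : ∀ u ∈ B, ∃ T : Finset (Fin n), q ≤ T.card ∧ T ⊆ S ∧
      (∀ x ∈ T, G.Adj u x) ∧ ∀ x ∈ T, ∀ y ∈ T, x ≠ y → G.Adj x y := by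
    intro u hu
    rw [hmemB] at hu
    obtain ⟨T, hT1, hT2, hT3, hT4⟩ := sat_clique hsat hmono hu.1
      (fun h => hu.2 h.symm)
    exact ⟨T, hT1, fun x hx => by simp [hSdef, hT2 x hx], hT3, hT4⟩
  have hqd : q ≤ d := by
    obtain ⟨u0, hu0⟩ := hBne
    obtain ⟨T, hT1, hT2, -, -⟩ := fact1 u0 hu0
    exact le_trans hT1 (Finset.card_le_card hT2)
  -- the five classes
  set R1 := R.filter (fun pr => pr.1 = v ∨ pr.2 = v) with hR1
  set R2 := R.filter (fun pr => pr.1 ∈ S ∧ pr.2 ∈ S) with hR2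
  set R3 := R.filter (fun pr => pr.1 ∈ B ∧ pr.2 ∈ S) with hR3
  set R4 := R.filter (fun pr => pr.1 ∈ S ∧ pr.2 ∈ B) with hR4
  set R5 := R.filter (fun pr => pr.1 ∈ B ∧ pr.2 ∈ B) with hR5
  -- membership basics
  have hadjS : ∀ x : Fin n, G.Adj v x → x ∈ S := fun x h => by simp [hSdef, h]
  -- pairwise disjoint and sum bound
  have hsum5 : R1.card + R2.card + R3.card + R4.card + R5.card ≤ R.card := by
    have dis12 : Disjoint R1 R2 := by
      rw [Finset.disjoint_left]
      rintro pr h1 h2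
      simp only [hR1, hR2, Finset.mem_filter] at h1 h2
      rcases h1.2 with h | h
      · exact hvS (h ▸ h2.2.1)
      · exact hvS (h ▸ h2.2.2)
    have dis13 : Disjoint R1 R3 := by
      rw [Finset.disjoint_left]
      rintro pr h1 h2
      simp only [hR1, hR3, Finset.mem_filter] at h1 h2
      rcases h1.2 with h | h
      · exact hvB (h ▸ h2.2.1)
      · exact hvS (h ▸ h2.2.2)
    have dis14 : Disjoint R1 R4 := by
      rw [Finset.disjoint_left]
      rintro pr h1 h2
      simp only [hR1, hR4, Finset.mem_filter] at h1 h2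
      rcases h1.2 with h | h
      · exact hvS (h ▸ h2.2.1)
      · exact hvB (h ▸ h2.2.2)
    have dis15 : Disjoint R1 R5 := by
      rw [Finset.disjoint_left]
      rintro pr h1 h2
      simp only [hR1, hR5, Finset.mem_filter] at h1 h2
      rcases h1.2 with h | h
      · exact hvB (h ▸ h2.2.1)
      · exact hvB (h ▸ h2.2.2)
    have dis23 : Disjoint R2 R3 := by
      rw [Finset.disjoint_left]
      rintro pr h1 h2
      simp only [hR2, hR3, Finset.mem_filter] at h1 h2
      exact hSB _ h1.2.1 h2.2.1
    have dis24 : Disjoint R2 R4 := by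
      rw [Finset.disjoint_left]
      rintro pr h1 h2
      simp only [hR2, hR4, Finset.mem_filter] at h1 h2
      exact hSB _ h1.2.2 h2.2.2
    have dis25 : Disjoint R2 R5 := by
      rw [Finset.disjoint_left]
      rintro pr h1 h2
      simp only [hR2, hR5, Finset.mem_filter] at h1 h2
      exact hSB _ h1.2.1 h2.2.1
    have dis34 : Disjoint R3 R4 := by
      rw [Finset.disjoint_left]
      rintro pr h1 h2
      simp only [hR3, hR4, Finset.mem_filter] at h1 h2
      exact hSB _ h2.2.1 h1.2.1
    have dis35 : Disjoint R3 R5 := by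
      rw [Finset.disjoint_left]
      rintro pr h1 h2
      simp only [hR3, hR5, Finset.mem_filter] at h1 h2
      exact hSB _ h1.2.2 h2.2.2
    have dis45 : Disjoint R4 R5 := by
      rw [Finset.disjoint_left]
      rintro pr h1 h2
      simp only [hR4, hR5, Finset.mem_filter] at h1 h2
      exact hSB _ h1.2.1 h2.2.1
    have hsub : R1 ∪ R2 ∪ R3 ∪ R4 ∪ R5 ⊆ R := by
      intro pr hpr
      simp only [Finset.mem_union] at hpr
      rcases hpr with (((h | h) | h) | h) | h <;>
        exact Finset.mem_of_mem_filter _ h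
    calc R1.card + R2.card + R3.card + R4.card + R5.card
        = (R1 ∪ R2 ∪ R3 ∪ R4 ∪ R5).card := by
          rw [Finset.card_union_of_disjoint, Finset.card_union_of_disjoint,
            Finset.card_union_of_disjoint, Finset.card_union_of_disjoint]
          · exact dis12
          · rw [Finset.disjoint_union_left]; exact ⟨dis13, dis23⟩
          · rw [Finset.disjoint_union_left, Finset.disjoint_union_left]
            exact ⟨⟨dis14, dis24⟩, dis34⟩
          · rw [Finset.disjoint_union_left, Finset.disjoint_union_left,
              Finset.disjoint_union_left]
            exact ⟨⟨⟨dis15, dis25⟩, dis35⟩, dis45⟩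
      _ ≤ R.card := Finset.card_le_card hsub
  -- class cardinalities
  have c1 : R1.card = 2 * d := by
    have heq : R1 = ({v} ×ˢ S) ∪ (S ×ˢ {v}) := by
      ext pr
      simp only [hR1, hRdef, Finset.mem_filter, Finset.mem_univ, true_and, Finset.mem_union,
        Finset.mem_product, Finset.mem_singleton, hSdef]
      constructor
      · rintro ⟨hadj, h | h⟩
        · exact Or.inl ⟨h, by rw [← h]; exact hadj⟩
        · exact Or.inr ⟨by rw [← h]; exact hadj.symm, h⟩
      · rintro (⟨h1, h2⟩ | ⟨h1, h2⟩)
        · exact ⟨by rw [h1]; exact h2, Or.inl h1⟩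
        · exact ⟨by rw [h2]; exact h1.symm, Or.inr h2⟩
    rw [heq, Finset.card_union_of_disjoint]
    · rw [Finset.card_product, Finset.card_product]
      simp [hddef]
      ring
    · rw [Finset.disjoint_left]
      rintro pr h1 h2
      simp only [Finset.mem_product, Finset.mem_singleton] at h1 h2
      exact hvS (h1.1 ▸ h2.1)
  have c2 : q * (q - 1) ≤ R2.card := by
    obtain ⟨u0, hu0⟩ := hBne
    obtain ⟨T, hT1, hT2, -, hT4⟩ := fact1 u0 hu0
    have hsub : T.offDiag ⊆ R2 := by
      intro pr hpr
      rw [Finset.mem_offDiag] at hpr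
      obtain ⟨hx, hy, hne⟩ := hpr
      simp only [hR2, hRdef, Finset.mem_filter, Finset.mem_univ, true_and]
      exact ⟨hT4 _ hx _ hy hne, hT2 hx, hT2 hy⟩
    calc q * (q - 1) ≤ T.card * (T.card - 1) := Nat.mul_le_mul hT1 (by omega)
      _ = T.offDiag.card := by rw [Finset.offDiag_card, mul_pred_eq]
      _ ≤ R2.card := Finset.card_le_card hsub
  have c3 : N * q ≤ R3.card := by
    have heq : R3 = B.biUnion (fun u => {u} ×ˢ (S.filter (fun x => G.Adj u x))) := by
      ext pr
      simp only [hR3, hRdef, Finset.mem_filter, Finset.mem_univ, true_and,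
        Finset.mem_biUnion, Finset.mem_product, Finset.mem_singleton]
      constructor
      · rintro ⟨hadj, h1, h2⟩
        exact ⟨pr.1, h1, rfl, h2, hadj⟩
      · rintro ⟨u, hu, rfl, hx1, hx2⟩
        exact ⟨hx2, hu, hx1⟩
    rw [heq, Finset.card_biUnion (hdisjfst B _)]
    calc N * q = ∑ _u ∈ B, q := by rw [Finset.sum_const, smul_eq_mul, hNdef]
      _ ≤ _ := by
        refine Finset.sum_le_sum fun u hu => ?_
        rw [Finset.card_product, Finset.card_singleton, one_mul]
        obtain ⟨T, hT1, hT2, hT3, -⟩ := fact1 u hu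
        refine le_trans hT1 (Finset.card_le_card ?_)
        intro x hx
        simp only [Finset.mem_filter]
        exact ⟨hT2 hx, hT3 x hx⟩
  have c4 : R4.card = R3.card := by
    apply Finset.card_bij' (fun pr _ => Prod.swap pr) (fun pr _ => Prod.swap pr)
    · intro a ha
      simp only [hR4, hRdef, Finset.mem_filter, Finset.mem_univ, true_and] at ha
      simp only [hR3, hRdef, Finset.mem_filter, Finset.mem_univ, true_and,
        Prod.fst_swap, Prod.snd_swap]
      exact ⟨ha.1.symm, ha.2.2, ha.2.1⟩
    · intro a ha
      simp only [hR3, hRdef, Finset.mem_filter, Finset.mem_univ, true_and] at ha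
      simp only [hR4, hRdef, Finset.mem_filter, Finset.mem_univ, true_and,
        Prod.fst_swap, Prod.snd_swap]
      exact ⟨ha.1.symm, ha.2.2, ha.2.1⟩
    · intro a _; exact Prod.swap_swap a
    · intro a _; exact Prod.swap_swap a
  have c5 : N * d ≤ R3.card + R5.card := by
    have heq : R.filter (fun pr => pr.1 ∈ B) = R3 ∪ R5 := by
      ext pr
      simp only [hR3, hR5, hRdef, Finset.mem_filter, Finset.mem_univ, true_and,
        Finset.mem_union]
      constructor
      · rintro ⟨hadj, h1⟩
        by_cases h2 : pr.2 ∈ S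
        · exact Or.inl ⟨hadj, h1, h2⟩
        · refine Or.inr ⟨hadj, h1, ?_⟩
          rw [hmemB]
          refine ⟨?_, fun h => h2 (hadjS _ h)⟩
          intro h
          have : G.Adj v pr.1 := h ▸ hadj.symm
          rw [hmemB] at h1
          exact h1.2 this
      · rintro (⟨hadj, h1, h2⟩ | ⟨hadj, h1, h2⟩) <;> exact ⟨hadj, h1⟩
    have hdisj : Disjoint R3 R5 := by
      rw [Finset.disjoint_left]
      rintro pr h1 h2
      simp only [hR3, hR5, Finset.mem_filter] at h1 h2
      exact hSB _ h1.2.2 h2.2.2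
    have hbc := hbiUcard B
    rw [← hNdef, heq, Finset.card_union_of_disjoint hdisj] at hbc
    omega
  have c6 : 2 * m = R5.card := by
    rw [hmdef, two_ncard_edge]
    apply Finset.card_bij (fun pr _ => ((pr.1.1 : Fin n), (pr.2.1 : Fin n)))
    · rintro ⟨x, y⟩ ha
      simp only [Finset.mem_filter, Finset.mem_univ, true_and, SimpleGraph.comap_adj,
        Function.Embedding.coe_subtype] at ha
      have hx := x.2
      have hy := y.2
      simp only [Set.mem_compl_iff, SimpleGraph.mem_neighborSet] at hx hy
      simp only [hR5, hRdef, Finset.mem_filter, Finset.mem_univ, true_and]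
      refine ⟨ha, ?_, ?_⟩
      · rw [hmemB]
        refine ⟨fun h => ?_, hx⟩
        rw [h] at ha
        exact hy ha
      · rw [hmemB]
        refine ⟨fun h => ?_, hy⟩
        rw [h] at ha
        exact hx ha.symm
    · rintro ⟨x, y⟩ _ ⟨x', y'⟩ _ h
      simp only [Prod.mk.injEq] at h ⊢
      exact ⟨Subtype.ext h.1, Subtype.ext h.2⟩
    · rintro ⟨x, y⟩ hxy
      simp only [hR5, hRdef, Finset.mem_filter, Finset.mem_univ, true_and] at hxy
      obtain ⟨hadj, h1, h2⟩ := hxy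
      rw [hmemB] at h1 h2
      refine ⟨(⟨x, by simp [SimpleGraph.mem_neighborSet, h1.2]⟩,
        ⟨y, by simp [SimpleGraph.mem_neighborSet, h2.2]⟩), ?_, rfl⟩
      simp only [Finset.mem_filter, Finset.mem_univ, true_and, SimpleGraph.comap_adj,
        Function.Embedding.coe_subtype]
      exact hadj
  -- assemble inequalities
  have hqn1 : q * (n - 1) = q * N + q * d := by
    have h1 : n - 1 = N + d := by omega
    rw [h1, Nat.mul_add]
  have hco1 : N * q = q * N := Nat.mul_comm _ _
  have hco2 : N * d = d * N := Nat.mul_comm _ _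
  have J1 : 2 * m + 2 * d + 2 * (q * (q - 1)) ≤ 2 * (q * d) + 2 * c := by omega
  have J2 : 2 * (d * N) + 2 * d + 2 * (q * (q - 1)) ≤
      2 * (q * N) + 2 * (q * d) + 2 * c + 2 * m := by omega
  -- final contradiction argument
  by_contra hcon
  push_neg at hcon
  obtain ⟨r, hr⟩ : ∃ r, d = q + r := ⟨d - q, by omega⟩
  have hrq : r ≤ q := by omega
  have hK : q * (q - 1) + q = q * q := by
    cases q with
    | zero => simp
    | succ s => simp only [Nat.succ_sub_one]; rw [Nat.mul_succ]
  have hqd_exp : q * d = q * q + q * r := by rw [hr]; ring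
  have hdN_exp : d * N = q * N + r * N := by rw [hr]; ring
  have hstar : m + r ≤ q * r + c := by omega
  have hss : 2 * (r * N) + 2 * r ≤ 2 * (q * r) + 2 * c + 2 * m := by omega
  have hNr : 2 * q + 2 * c ≤ N + r := by omega
  have hr1 : r + 1 ≤ q * r := by omega
  have hrpos : 1 ≤ r := by
    rcases Nat.eq_zero_or_pos r with h | h
    · subst h; simp at hr1
    · exact h
  have hmul2 : (r + 2) * (r + 3) ≤ (q + 2) * (q + 3) :=
    Nat.mul_le_mul (by omega) (by omega)
  obtain ⟨s, rfl⟩ : ∃ s, r = s + 1 := ⟨r - 1, by omega⟩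
  have hmul1' : (s + 1) * (2 * q + 2 * c) ≤ (s + 1) * (N + (s + 1)) :=
    Nat.mul_le_mul_left _ hNr
  have e1 : (s + 1) * (2 * q + 2 * c) = 2 * (q * (s + 1)) + 2 * ((s + 1) * c) := by ring
  have e2 : (s + 1) * (N + (s + 1)) = (s + 1) * N + (s + 1) * (s + 1) := by ring
  have hZ : 4 * ((s + 1) * c) + 4 * (s + 1) ≤ 4 * c + 2 * ((s + 1) * (s + 1)) := by omega
  have hW : (s + 1 + 2) * (s + 1 + 3) ≤ 2 * c := le_trans hmul2 hc2
  have e3 : (s + 1 + 2) * (s + 1 + 3) = s * s + 7 * s + 12 := by ring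
  have e4 : (s + 1) * c = s * c + c := by ring
  have e5 : (s + 1) * (s + 1) = s * s + 2 * s + 1 := by ring
  have hmul6 : s * (s * s + 7 * s + 12) ≤ s * (2 * c) := Nat.mul_le_mul_left s (by omega)
  have e6 : s * (s * s + 7 * s + 12) = s * (s * s) + 7 * (s * s) + 12 * s := by ring
  have e7 : s * (2 * c) = 2 * (s * c) := by ring
  omega
end
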